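/- arXiv:1701.08687 — 8 statements merged into one kernel-verified Lean document; each statement's English description precedes it below -/
import Mathlib

section
/- Double robustness in g: for any measurable functions ḡ(0,·), ḡ(1,·) (square integrable), if the propensity score m₀ is correct then E[ (ḡ(1,Z) − ḡ(0,Z)) + D(Y − ḡ(1,Z))/m₀(Z) − (1−D)(Y − ḡ(0,Z))/(1−m₀(Z)) ] = E[g₀(1,Z) − g₀(0,Z)]. -/
open MeasureTheory ProbabilityTheory
open scoped Topology

/-- Double robustness in the outcome regression: if the propensity score `m₀` is correct, the
AIPW functional evaluated at arbitrary square-integrable candidates `ḡ(0,·), ḡ(1,·)` identifies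
the ATE `E[g₀(1,Z) − g₀(0,Z)]`. -/
theorem statement4 {Ω 𝓩 : Type*} [MeasurableSpace Ω] [MeasurableSpace 𝓩]
    (μ : Measure Ω) [IsProbabilityMeasure μ]
    (Y D : Ω → ℝ) (Z : Ω → 𝓩) (g0 g1 gbar0 gbar1 m0 : 𝓩 → ℝ) (ε : ℝ) (hε : 0 < ε)
    (hY : Measurable Y) (hD : Measurable D) (hZ : Measurable Z)
    (hg0 : Measurable g0) (hg1 : Measurable g1) (hm0 : Measurable m0)
    (hgbar0 : Measurable gbar0) (hgbar1 : Measurable gbar1)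
    (hDbin : ∀ ω, D ω = 0 ∨ D ω = 1)
    -- correctness of the outcome regressions `g₀(d,Z) = E[Y ∣ D = d, Z]`:
    (hreg1 : μ[fun ω => D ω * (Y ω - g1 (Z ω)) |
        MeasurableSpace.comap Z inferInstance] =ᵐ[μ] 0)
    (hreg0 : μ[fun ω => (1 - D ω) * (Y ω - g0 (Z ω)) |
        MeasurableSpace.comap Z inferInstance] =ᵐ[μ] 0)
    -- the propensity score is correct: `m₀(Z) = E[D ∣ Z]`:
    (hm : μ[D | MeasurableSpace.comap Z inferInstance] =ᵐ[μ] fun ω => m0 (Z ω))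
    (hover : ∀ᵐ ω ∂μ, ε ≤ m0 (Z ω) ∧ m0 (Z ω) ≤ 1 - ε)
    -- square integrability:
    (hYL2 : MemLp Y 2 μ) (hg0L2 : MemLp (fun ω => g0 (Z ω)) 2 μ)
    (hg1L2 : MemLp (fun ω => g1 (Z ω)) 2 μ)
    (hgbar0L2 : MemLp (fun ω => gbar0 (Z ω)) 2 μ)
    (hgbar1L2 : MemLp (fun ω => gbar1 (Z ω)) 2 μ)
    (hint1 : Integrable (fun ω => D ω * (Y ω - gbar1 (Z ω)) / m0 (Z ω)) μ)
    (hint0 : Integrable (fun ω => (1 - D ω) * (Y ω - gbar0 (Z ω)) / (1 - m0 (Z ω))) μ) :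
    ∫ ω, ((gbar1 (Z ω) - gbar0 (Z ω))
        + D ω * (Y ω - gbar1 (Z ω)) / m0 (Z ω)
        - (1 - D ω) * (Y ω - gbar0 (Z ω)) / (1 - m0 (Z ω))) ∂μ
      = ∫ ω, (g1 (Z ω) - g0 (Z ω)) ∂μ := by
  set mZ := MeasurableSpace.comap Z inferInstance with hmZdef
  have hm_le := hZ.comap_le
  haveI : IsFiniteMeasure (μ.trim hm_le) := isFiniteMeasure_trim hm_le
  have hZc : @Measurable Ω 𝓩 mZ _ Z := fun s hs => ⟨s, hs, rfl⟩
  -- integrability of the basic functions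
  have hYi : Integrable Y μ := hYL2.integrable one_le_two
  have hg0i : Integrable (fun ω => g0 (Z ω)) μ := hg0L2.integrable one_le_two
  have hg1i : Integrable (fun ω => g1 (Z ω)) μ := hg1L2.integrable one_le_two
  have hgbar0i : Integrable (fun ω => gbar0 (Z ω)) μ := hgbar0L2.integrable one_le_two
  have hgbar1i : Integrable (fun ω => gbar1 (Z ω)) μ := hgbar1L2.integrable one_le_two
  have hDb : ∀ ω, ‖D ω‖ ≤ 1 := by
    intro ω; rcases hDbin ω with h | h <;> simp [h]
  have h1Db : ∀ ω, ‖1 - D ω‖ ≤ 1 := by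
    intro ω; rcases hDbin ω with h | h <;> simp [h]
  have hDint : Integrable D μ :=
    (integrable_const (1 : ℝ)).mono' hD.aestronglyMeasurable (Filter.Eventually.of_forall hDb)
  -- consequences of overlap
  have hb1 : ∀ᵐ ω ∂μ, ‖(m0 (Z ω))⁻¹‖ ≤ ε⁻¹ := by
    filter_upwards [hover] with ω hω
    have h0 : 0 < m0 (Z ω) := lt_of_lt_of_le hε hω.1
    rw [Real.norm_eq_abs, abs_of_pos (inv_pos.mpr h0)]
    exact inv_anti₀ hε hω.1
  have hb0 : ∀ᵐ ω ∂μ, ‖(1 - m0 (Z ω))⁻¹‖ ≤ ε⁻¹ := by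
    filter_upwards [hover] with ω hω
    have h0 : 0 < 1 - m0 (Z ω) := by linarith [hω.2]
    rw [Real.norm_eq_abs, abs_of_pos (inv_pos.mpr h0)]
    exact inv_anti₀ hε (by linarith [hω.2])
  -- key lemma: pulling out mZ-measurable factors
  have key : ∀ f g : Ω → ℝ, StronglyMeasurable[mZ] f → Integrable (f * g) μ →
      Integrable g μ → ∫ ω, f ω * g ω ∂μ = ∫ ω, f ω * (μ[g|mZ]) ω ∂μ := by
    intro f g hf hfg hg
    have h1 : ∫ ω, f ω * g ω ∂μ = ∫ ω, (μ[f * g|mZ]) ω ∂μ := (integral_condExp hm_le).symm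
    rw [h1]
    refine integral_congr_ae ?_
    filter_upwards [condExp_mul_of_stronglyMeasurable_left hf hfg hg] with ω hω
    exact hω
  -- the measurable factors
  set f1 : Ω → ℝ := fun ω => (m0 (Z ω))⁻¹ with hf1def
  set f2 : Ω → ℝ := fun ω => (m0 (Z ω))⁻¹ * (g1 (Z ω) - gbar1 (Z ω)) with hf2def
  set f3 : Ω → ℝ := fun ω => (1 - m0 (Z ω))⁻¹ with hf3def
  set f4 : Ω → ℝ := fun ω => (1 - m0 (Z ω))⁻¹ * (g0 (Z ω) - gbar0 (Z ω)) with hf4def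
  set q1 : Ω → ℝ := fun ω => D ω * (Y ω - g1 (Z ω)) with hq1def
  set q0 : Ω → ℝ := fun ω => (1 - D ω) * (Y ω - g0 (Z ω)) with hq0def
  have hf1m : StronglyMeasurable[mZ] f1 := (Measurable.stronglyMeasurable (hm0.inv.comp hZc))
  have hf2m : StronglyMeasurable[mZ] f2 :=
    (Measurable.stronglyMeasurable ((hm0.inv.mul (hg1.sub hgbar1)).comp hZc))
  have hf3m : StronglyMeasurable[mZ] f3 :=
    (Measurable.stronglyMeasurable (((measurable_const.sub hm0).inv).comp hZc))
  have hf4m : StronglyMeasurable[mZ] f4 :=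
    (Measurable.stronglyMeasurable ((((measurable_const.sub hm0).inv).mul
      (hg0.sub hgbar0)).comp hZc))
  -- integrabilities
  have hq1i : Integrable q1 μ :=
    (hYi.sub hg1i).bdd_mul hD.aestronglyMeasurable (Filter.Eventually.of_forall hDb)
  have hq0i : Integrable q0 μ :=
    (hYi.sub hg0i).bdd_mul (measurable_const.sub hD).aestronglyMeasurable
      (Filter.Eventually.of_forall h1Db)
  have hf1a := ((hm0.inv).comp hZ).aestronglyMeasurable (μ := μ)
  have hf2a :=
    ((hm0.inv.mul (hg1.sub hgbar1)).comp hZ).aestronglyMeasurable (μ := μ)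
  have hf3a :=
    (((measurable_const (a := (1:ℝ)).sub hm0).inv).comp hZ).aestronglyMeasurable (μ := μ)
  have hf4a :=
    ((((measurable_const (a := (1:ℝ)).sub hm0).inv).mul (hg0.sub hgbar0)).comp hZ).aestronglyMeasurable (μ := μ)
  have hf1q1 : Integrable (fun ω => f1 ω * q1 ω) μ := hq1i.bdd_mul hf1a hb1
  have hf3q0 : Integrable (fun ω => f3 ω * q0 ω) μ := hq0i.bdd_mul hf3a hb0
  have hf2i : Integrable f2 μ := (hg1i.sub hgbar1i).bdd_mul hf1a hb1
  have hf4i : Integrable f4 μ := (hg0i.sub hgbar0i).bdd_mul hf3a hb0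
  have hf2D : Integrable (fun ω => f2 ω * D ω) μ := by
    have : Integrable (fun ω => D ω * f2 ω) μ :=
      hf2i.bdd_mul hD.aestronglyMeasurable (Filter.Eventually.of_forall hDb)
    exact this.congr (Filter.Eventually.of_forall fun ω => mul_comm _ _)
  have hf4D : Integrable (fun ω => f4 ω * (1 - D ω)) μ := by
    have : Integrable (fun ω => (1 - D ω) * f4 ω) μ :=
      hf4i.bdd_mul (measurable_const.sub hD).aestronglyMeasurable
        (Filter.Eventually.of_forall h1Db)
    exact this.congr (Filter.Eventually.of_forall fun ω => mul_comm _ _)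
  have h1Dint : Integrable (fun ω => 1 - D ω) μ := (integrable_const (1:ℝ)).sub hDint
  -- conditional expectation of 1 - D
  have h1Dce : μ[(fun ω => 1 - D ω)|mZ] =ᵐ[μ] fun ω => 1 - m0 (Z ω) := by
    have h := condExp_sub (m := mZ) (μ := μ) (integrable_const (1:ℝ)) hDint
    have hc : μ[(fun _ : Ω => (1:ℝ))|mZ] = fun _ => (1:ℝ) := condExp_const hm_le 1
    filter_upwards [h, hm] with ω h1 h2
    have : (fun ω => 1 - D ω) = (fun _ : Ω => (1:ℝ)) - D := rfl
    rw [this, h1]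
    simp [hc, h2]
  -- the two correction terms
  have hB : ∫ ω, D ω * (Y ω - gbar1 (Z ω)) / m0 (Z ω) ∂μ
      = ∫ ω, (g1 (Z ω) - gbar1 (Z ω)) ∂μ := by
    have hsplit : ∫ ω, D ω * (Y ω - gbar1 (Z ω)) / m0 (Z ω) ∂μ
        = ∫ ω, (f1 ω * q1 ω + f2 ω * D ω) ∂μ := by
      refine integral_congr_ae ?_
      filter_upwards [hover] with ω hω
      have h0 : m0 (Z ω) ≠ 0 := ne_of_gt (lt_of_lt_of_le hε hω.1)
      simp only [hf1def, hf2def, hq1def]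
      field_simp
      ring
    rw [hsplit, integral_add hf1q1 hf2D]
    have hI1 : ∫ ω, f1 ω * q1 ω ∂μ = 0 := by
      rw [key f1 q1 hf1m hf1q1 hq1i]
      have : ∫ ω, f1 ω * (μ[q1|mZ]) ω ∂μ = ∫ ω, (0:ℝ) ∂μ := by
        refine integral_congr_ae ?_
        filter_upwards [hreg1] with ω hω
        simp [hq1def] at hω
        exact mul_eq_zero_of_right _ hω
      simp [this]
    have hI2 : ∫ ω, f2 ω * D ω ∂μ = ∫ ω, (g1 (Z ω) - gbar1 (Z ω)) ∂μ := by
      rw [key f2 D hf2m hf2D hDint]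
      refine integral_congr_ae ?_
      filter_upwards [hm, hover] with ω h1 h2
      have h0 : m0 (Z ω) ≠ 0 := ne_of_gt (lt_of_lt_of_le hε h2.1)
      simp only [hf2def, h1]
      field_simp
    rw [hI1, hI2, zero_add]
  have hC : ∫ ω, (1 - D ω) * (Y ω - gbar0 (Z ω)) / (1 - m0 (Z ω)) ∂μ
      = ∫ ω, (g0 (Z ω) - gbar0 (Z ω)) ∂μ := by
    have hsplit : ∫ ω, (1 - D ω) * (Y ω - gbar0 (Z ω)) / (1 - m0 (Z ω)) ∂μ
        = ∫ ω, (f3 ω * q0 ω + f4 ω * (1 - D ω)) ∂μ := by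
      refine integral_congr_ae ?_
      filter_upwards [hover] with ω hω
      have h0 : 1 - m0 (Z ω) ≠ 0 := by
        have : (0:ℝ) < 1 - m0 (Z ω) := by linarith [hω.2]
        exact ne_of_gt this
      simp only [hf3def, hf4def, hq0def]
      field_simp
      ring
    rw [hsplit, integral_add hf3q0 hf4D]
    have hI1 : ∫ ω, f3 ω * q0 ω ∂μ = 0 := by
      rw [key f3 q0 hf3m hf3q0 hq0i]
      have : ∫ ω, f3 ω * (μ[q0|mZ]) ω ∂μ = ∫ ω, (0:ℝ) ∂μ := by
        refine integral_congr_ae ?_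
        filter_upwards [hreg0] with ω hω
        simp [hq0def] at hω
        exact mul_eq_zero_of_right _ hω
      simp [this]
    have hI2 : ∫ ω, f4 ω * (1 - D ω) ∂μ = ∫ ω, (g0 (Z ω) - gbar0 (Z ω)) ∂μ := by
      rw [key f4 (fun ω => 1 - D ω) hf4m hf4D h1Dint]
      refine integral_congr_ae ?_
      filter_upwards [h1Dce, hover] with ω h1 h2
      have h0 : 1 - m0 (Z ω) ≠ 0 := by
        have : (0:ℝ) < 1 - m0 (Z ω) := by linarith [h2.2]
        exact ne_of_gt this
      simp only [hf4def, h1]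
      field_simp
    rw [hI1, hI2, zero_add]
  have hA : Integrable (fun ω => gbar1 (Z ω) - gbar0 (Z ω)) μ := hgbar1i.sub hgbar0i
  have hAB : Integrable (fun ω => (gbar1 (Z ω) - gbar0 (Z ω))
      + D ω * (Y ω - gbar1 (Z ω)) / m0 (Z ω)) μ := hA.add hint1
  rw [integral_sub hAB hint0, integral_add hA hint1, hB, hC,
    integral_sub hgbar1i hgbar0i, integral_sub hg1i hgbar1i, integral_sub hg0i hgbar0i,
    integral_sub hg1i hg0i]
  ring
end

section
/- Double robustness in m: for any measurable function m̄ with ε ≤ m̄(Z) ≤ 1−ε a.s., if the outcome regressions g₀(0,·), g₀(1,·) are correct then E[ (g₀(1,Z) − g₀(0,Z)) + D(Y − g₀(1,Z))/m̄(Z) − (1−D)(Y − g₀(0,Z))/(1−m̄(Z)) ] = E[g₀(1,Z) − g₀(0,Z)]. -/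
open MeasureTheory ProbabilityTheory
open scoped Topology

/-- Double robustness in the propensity score: if the outcome regressions `g₀(0,·), g₀(1,·)` are
correct, the AIPW functional evaluated at an arbitrary candidate `m̄` bounded in `[ε, 1−ε]`
identifies the ATE `E[g₀(1,Z) − g₀(0,Z)]`. -/
theorem statement5 {Ω 𝓩 : Type*} [MeasurableSpace Ω] [MeasurableSpace 𝓩]
    (μ : Measure Ω) [IsProbabilityMeasure μ]
    (Y D : Ω → ℝ) (Z : Ω → 𝓩) (g0 g1 mbar : 𝓩 → ℝ) (ε : ℝ) (hε : 0 < ε)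
    (hY : Measurable Y) (hD : Measurable D) (hZ : Measurable Z)
    (hg0 : Measurable g0) (hg1 : Measurable g1) (hmbar : Measurable mbar)
    (hDbin : ∀ ω, D ω = 0 ∨ D ω = 1)
    -- `Y = g₀(D,Z) + ζ` with `E[ζ ∣ D, Z] = 0`, i.e. the outcome regressions are correct:
    (hζ : μ[fun ω => Y ω - (D ω * g1 (Z ω) + (1 - D ω) * g0 (Z ω)) |
        MeasurableSpace.comap (fun ω => (D ω, Z ω)) inferInstance] =ᵐ[μ] 0)
    -- `m̄` is bounded away from 0 and 1:
    (hover : ∀ᵐ ω ∂μ, ε ≤ mbar (Z ω) ∧ mbar (Z ω) ≤ 1 - ε)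
    -- square integrability:
    (hYL2 : MemLp Y 2 μ) (hg0L2 : MemLp (fun ω => g0 (Z ω)) 2 μ)
    (hg1L2 : MemLp (fun ω => g1 (Z ω)) 2 μ)
    (hint1 : Integrable (fun ω => D ω * (Y ω - g1 (Z ω)) / mbar (Z ω)) μ)
    (hint0 : Integrable (fun ω => (1 - D ω) * (Y ω - g0 (Z ω)) / (1 - mbar (Z ω))) μ) :
    ∫ ω, ((g1 (Z ω) - g0 (Z ω))
        + D ω * (Y ω - g1 (Z ω)) / mbar (Z ω)
        - (1 - D ω) * (Y ω - g0 (Z ω)) / (1 - mbar (Z ω))) ∂μ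
      = ∫ ω, (g1 (Z ω) - g0 (Z ω)) ∂μ := by
  set m := MeasurableSpace.comap (fun ω => (D ω, Z ω)) inferInstance with hm_def
  have hm : m ≤ _ := (hD.prodMk hZ).comap_le
  set ζ : Ω → ℝ := fun ω => Y ω - (D ω * g1 (Z ω) + (1 - D ω) * g0 (Z ω)) with hζdef
  have hDZm : Measurable[m] (fun ω => (D ω, Z ω)) := measurable_iff_comap_le.mpr le_rfl
  -- boundedness of D
  have hDbd : ∀ ω, ‖D ω‖ ≤ 1 := by
    intro ω; rcases hDbin ω with h | h <;> simp [h]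
  have h1Dbd : ∀ ω, ‖1 - D ω‖ ≤ 1 := by
    intro ω; rcases hDbin ω with h | h <;> simp [h]
  -- integrability of ζ
  have hYint : Integrable Y μ := hYL2.integrable one_le_two
  have hg1int : Integrable (fun ω => g1 (Z ω)) μ := hg1L2.integrable one_le_two
  have hg0int : Integrable (fun ω => g0 (Z ω)) μ := hg0L2.integrable one_le_two
  have hDg1int : Integrable (fun ω => D ω * g1 (Z ω)) μ :=
    hg1int.bdd_mul hD.aestronglyMeasurable (Filter.Eventually.of_forall hDbd)
  have h1Dg0int : Integrable (fun ω => (1 - D ω) * g0 (Z ω)) μ :=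
    hg0int.bdd_mul ((measurable_const.sub hD).aestronglyMeasurable) (Filter.Eventually.of_forall h1Dbd)
  have hζint : Integrable ζ μ := hYint.sub (hDg1int.add h1Dg0int)
  haveI : SigmaFinite (μ.trim hm) := by
    have : IsFiniteMeasure (μ.trim hm) := isFiniteMeasure_trim hm
    exact this.toSigmaFinite
  -- key: for m-measurable f with f*ζ integrable, ∫ f*ζ = 0
  have key : ∀ f : Ω → ℝ, StronglyMeasurable[m] f → Integrable (f * ζ) μ →
      ∫ ω, f ω * ζ ω ∂μ = 0 := by
    intro f hf hfζ
    have h1 : μ[f * ζ | m] =ᵐ[μ] f * μ[ζ | m] :=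
      condExp_mul_of_stronglyMeasurable_left hf hfζ hζint
    have h2 : μ[f * ζ | m] =ᵐ[μ] 0 := by
      refine h1.trans ?_
      filter_upwards [hζ] with ω hω
      simp [Pi.mul_apply, hω]
    calc ∫ ω, f ω * ζ ω ∂μ = ∫ ω, (μ[f * ζ | m]) ω ∂μ := (integral_condExp hm).symm
      _ = 0 := by rw [integral_eq_zero_of_ae h2]
  -- pointwise identities
  have e1 : ∀ ω, D ω * (Y ω - g1 (Z ω)) / mbar (Z ω) = (D ω / mbar (Z ω)) * ζ ω := by
    intro ω; rcases hDbin ω with h | h <;> simp only [hζdef, h] <;> ring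
  have e0 : ∀ ω, (1 - D ω) * (Y ω - g0 (Z ω)) / (1 - mbar (Z ω))
      = ((1 - D ω) / (1 - mbar (Z ω))) * ζ ω := by
    intro ω; rcases hDbin ω with h | h <;> simp only [hζdef, h] <;> ring
  -- m-measurability of the weight functions
  have hf1m : StronglyMeasurable[m] (fun ω => D ω / mbar (Z ω)) :=
    ((measurable_fst.div (hmbar.comp measurable_snd)).comp hDZm).stronglyMeasurable
  have hf0m : StronglyMeasurable[m] (fun ω => (1 - D ω) / (1 - mbar (Z ω))) :=
    (((measurable_const.sub measurable_fst).div
        (measurable_const.sub (hmbar.comp measurable_snd))).comp hDZm).stronglyMeasurable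
  have hint1' : Integrable ((fun ω => D ω / mbar (Z ω)) * ζ) μ :=
    hint1.congr (Filter.Eventually.of_forall fun ω => e1 ω)
  have hint0' : Integrable ((fun ω => (1 - D ω) / (1 - mbar (Z ω))) * ζ) μ :=
    hint0.congr (Filter.Eventually.of_forall fun ω => e0 ω)
  have hB : ∫ ω, D ω * (Y ω - g1 (Z ω)) / mbar (Z ω) ∂μ = 0 := by
    rw [integral_congr_ae (Filter.Eventually.of_forall e1)]
    exact key _ hf1m hint1'
  have hC : ∫ ω, (1 - D ω) * (Y ω - g0 (Z ω)) / (1 - mbar (Z ω)) ∂μ = 0 := by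
    rw [integral_congr_ae (Filter.Eventually.of_forall e0)]
    exact key _ hf0m hint0'
  have hAint : Integrable (fun ω => g1 (Z ω) - g0 (Z ω)) μ := hg1int.sub hg0int
  have hABint : Integrable (fun ω => (g1 (Z ω) - g0 (Z ω))
      + D ω * (Y ω - g1 (Z ω)) / mbar (Z ω)) μ := hAint.add hint1
  rw [integral_sub hABint hint0, integral_add hAint hint1, hB, hC]
  ring
end

section
/- Neyman orthogonality of the AIPW ATE score with respect to the outcome regression: for any square-integrable direction h(d,z), the Gateaux derivative at t = 0 of t ↦ E[ ((g₀+th)(1,Z) − (g₀+th)(0,Z)) + D(Y − (g₀+th)(1,Z))/m₀(Z) − (1−D)(Y − (g₀+th)(0,Z))/(1−m₀(Z)) − θ₀ ] equals 0. -/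
open MeasureTheory ProbabilityTheory
open scoped Topology


lemma bnd_aux {ε m b a : ℝ} (hε : 0 < ε) (hm : ε ≤ m) (hb : |b| ≤ 1) :
    ‖a / m * b‖ ≤ ‖ε⁻¹ * a‖ := by
  have hm0 : 0 < m := hε.trans_le hm
  rw [Real.norm_eq_abs, Real.norm_eq_abs, abs_mul, abs_mul, abs_div, abs_inv,
    abs_of_pos hm0, abs_of_pos hε]
  rw [div_mul_eq_mul_div, div_le_iff₀ hm0]
  have f1 : |a| * |b| ≤ |a| * 1 := mul_le_mul_of_nonneg_left hb (abs_nonneg a)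
  have f2 : ε⁻¹ * |a| * ε ≤ ε⁻¹ * |a| * m :=
    mul_le_mul_of_nonneg_left hm (mul_nonneg (inv_nonneg.2 hε.le) (abs_nonneg a))
  have f3 : ε⁻¹ * |a| * ε = |a| := by field_simp
  linarith

lemma key_aux {Ω 𝓩 : Type*} [MeasurableSpace Ω] [MeasurableSpace 𝓩]
    (μ : Measure Ω) [IsProbabilityMeasure μ]
    (D : Ω → ℝ) (Z : Ω → 𝓩) (hZ : Measurable Z) (m0 φ : 𝓩 → ℝ) (hφ : Measurable φ)
    (hm : μ[D | MeasurableSpace.comap Z inferInstance] =ᵐ[μ] fun ω => m0 (Z ω))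
    (hD : Integrable D μ)
    (hint : Integrable (fun ω => φ (Z ω) * D ω) μ) :
    ∫ ω, φ (Z ω) * D ω ∂μ = ∫ ω, φ (Z ω) * m0 (Z ω) ∂μ := by
  have hle : MeasurableSpace.comap Z inferInstance ≤ (inferInstance : MeasurableSpace Ω) :=
    hZ.comap_le
  haveI : SigmaFinite (μ.trim hle) := by infer_instance
  have hsm : StronglyMeasurable[MeasurableSpace.comap Z inferInstance] (fun ω => φ (Z ω)) :=
    (hφ.comp (measurable_iff_comap_le.mpr le_rfl)).stronglyMeasurable
  have h1 : μ[(fun ω => φ (Z ω)) * D | MeasurableSpace.comap Z inferInstance]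
      =ᵐ[μ] (fun ω => φ (Z ω)) * μ[D | MeasurableSpace.comap Z inferInstance] :=
    condExp_mul_of_stronglyMeasurable_left hsm hint hD
  calc ∫ ω, φ (Z ω) * D ω ∂μ
      = ∫ ω, (μ[(fun ω => φ (Z ω)) * D | MeasurableSpace.comap Z inferInstance]) ω ∂μ :=
        (integral_condExp hle).symm
    _ = ∫ ω, φ (Z ω) * m0 (Z ω) ∂μ := by
        refine integral_congr_ae ?_
        filter_upwards [h1, hm] with ω h1ω hmω
        simp only [Pi.mul_apply] at h1ω
        rw [h1ω, hmω]

/-- Neyman orthogonality of the AIPW ATE score with respect to the outcome regression: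
for any square-integrable direction `h(d,z)`, the Gateaux derivative at `t = 0` of the map
`t ↦ E[ψ(W; θ₀, (g₀ + t h, m₀))]` is zero. -/
theorem statement6 {Ω 𝓩 : Type*} [MeasurableSpace Ω] [MeasurableSpace 𝓩]
    (μ : Measure Ω) [IsProbabilityMeasure μ]
    (Y D : Ω → ℝ) (Z : Ω → 𝓩) (g0 g1 h0 h1 m0 : 𝓩 → ℝ) (ε : ℝ) (hε : 0 < ε)
    (hY : Measurable Y) (hD : Measurable D) (hZ : Measurable Z)
    (hg0 : Measurable g0) (hg1 : Measurable g1) (hm0 : Measurable m0)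
    (hh0 : Measurable h0) (hh1 : Measurable h1)
    (hDbin : ∀ ω, D ω = 0 ∨ D ω = 1)
    -- `g₀(d,Z) = E[Y ∣ D = d, Z]`:
    (hζ : μ[fun ω => Y ω - (D ω * g1 (Z ω) + (1 - D ω) * g0 (Z ω)) |
        MeasurableSpace.comap (fun ω => (D ω, Z ω)) inferInstance] =ᵐ[μ] 0)
    -- `m₀(Z) = E[D ∣ Z]`:
    (hm : μ[D | MeasurableSpace.comap Z inferInstance] =ᵐ[μ] fun ω => m0 (Z ω))
    (hover : ∀ᵐ ω ∂μ, ε ≤ m0 (Z ω) ∧ m0 (Z ω) ≤ 1 - ε)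
    -- square-integrable directions and moments:
    (hYL2 : MemLp Y 2 μ) (hg0L2 : MemLp (fun ω => g0 (Z ω)) 2 μ)
    (hg1L2 : MemLp (fun ω => g1 (Z ω)) 2 μ)
    (hh0L2 : MemLp (fun ω => h0 (Z ω)) 2 μ)
    (hh1L2 : MemLp (fun ω => h1 (Z ω)) 2 μ)
    -- integrability of the score along the path:
    (hint : ∀ t : ℝ, Integrable (fun ω =>
        ((g1 (Z ω) + t * h1 (Z ω)) - (g0 (Z ω) + t * h0 (Z ω)))
        + D ω * (Y ω - (g1 (Z ω) + t * h1 (Z ω))) / m0 (Z ω)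
        - (1 - D ω) * (Y ω - (g0 (Z ω) + t * h0 (Z ω))) / (1 - m0 (Z ω))) μ) :
    HasDerivAt (fun t : ℝ => ∫ ω,
        (((g1 (Z ω) + t * h1 (Z ω)) - (g0 (Z ω) + t * h0 (Z ω)))
        + D ω * (Y ω - (g1 (Z ω) + t * h1 (Z ω))) / m0 (Z ω)
        - (1 - D ω) * (Y ω - (g0 (Z ω) + t * h0 (Z ω))) / (1 - m0 (Z ω))
        - (∫ ω', (g1 (Z ω') - g0 (Z ω')) ∂μ)) ∂μ) 0 0 := by
  set C : ℝ := ∫ ω', (g1 (Z ω') - g0 (Z ω')) ∂μ with hC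
  set f : ℝ → Ω → ℝ := fun t ω =>
      ((g1 (Z ω) + t * h1 (Z ω)) - (g0 (Z ω) + t * h0 (Z ω)))
      + D ω * (Y ω - (g1 (Z ω) + t * h1 (Z ω))) / m0 (Z ω)
      - (1 - D ω) * (Y ω - (g0 (Z ω) + t * h0 (Z ω))) / (1 - m0 (Z ω)) with hf
  -- basic integrability
  have hDabs : ∀ ω, |D ω| ≤ 1 := fun ω => by rcases hDbin ω with h | h <;> simp [h]
  have hDint : Integrable D μ :=
    ⟨hD.aestronglyMeasurable,
      HasFiniteIntegral.of_bounded (C := 1) (ae_of_all _ fun ω => by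
        simpa [Real.norm_eq_abs] using hDabs ω)⟩
  have hD'int : Integrable (fun ω => 1 - D ω) μ := (integrable_const 1).sub hDint
  have hh1int : Integrable (fun ω => h1 (Z ω)) μ := hh1L2.integrable (by norm_num)
  have hh0int : Integrable (fun ω => h0 (Z ω)) μ := hh0L2.integrable (by norm_num)
  -- integrability of the weighted terms
  have hψ1int : Integrable (fun ω => h1 (Z ω) / m0 (Z ω) * D ω) μ := by
    refine Integrable.mono (hh1int.const_mul ε⁻¹)
      (((hh1.comp hZ).div (hm0.comp hZ)).mul hD).aestronglyMeasurable ?_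
    filter_upwards [hover] with ω hω
    exact bnd_aux hε hω.1 (hDabs ω)
  have hψ0int : Integrable (fun ω => h0 (Z ω) / (1 - m0 (Z ω)) * (1 - D ω)) μ := by
    refine Integrable.mono (hh0int.const_mul ε⁻¹)
      (((hh0.comp hZ).div (measurable_const.sub (hm0.comp hZ))).mul
        (measurable_const.sub hD)).aestronglyMeasurable ?_
    filter_upwards [hover] with ω hω
    have hb : |1 - D ω| ≤ 1 := by rcases hDbin ω with h | h <;> simp [h]
    exact bnd_aux hε (by linarith [hω.2]) hb
  -- conditional expectation of 1 - D
  have hm' : μ[(fun ω => 1 - D ω) | MeasurableSpace.comap Z inferInstance]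
      =ᵐ[μ] fun ω => (fun z => 1 - m0 z) (Z ω) := by
    have hle : MeasurableSpace.comap Z inferInstance ≤ (inferInstance : MeasurableSpace Ω) :=
      hZ.comap_le
    have h := condExp_sub (μ := μ) (m := MeasurableSpace.comap Z inferInstance)
      (integrable_const (1:ℝ)) hDint
    have hc : μ[(fun _ : Ω => (1:ℝ)) | MeasurableSpace.comap Z inferInstance]
        = fun _ => (1:ℝ) := condExp_const hle 1
    have hfun : (fun ω => 1 - D ω) = (fun _ : Ω => (1:ℝ)) - D := rfl
    rw [hfun]
    refine h.trans ?_
    rw [hc]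
    filter_upwards [hm] with ω hmω
    simp only [Pi.sub_apply]
    rw [hmω]
  -- the two key identities
  have e1 : ∫ ω, h1 (Z ω) / m0 (Z ω) * D ω ∂μ = ∫ ω, h1 (Z ω) ∂μ := by
    rw [key_aux μ D Z hZ m0 (fun z => h1 z / m0 z) (hh1.div hm0) hm hDint hψ1int]
    refine integral_congr_ae ?_
    filter_upwards [hover] with ω hω
    have hpos : m0 (Z ω) ≠ 0 := (lt_of_lt_of_le hε hω.1).ne'
    field_simp
  have e0 : ∫ ω, h0 (Z ω) / (1 - m0 (Z ω)) * (1 - D ω) ∂μ = ∫ ω, h0 (Z ω) ∂μ := by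
    rw [key_aux μ (fun ω => 1 - D ω) Z hZ (fun z => 1 - m0 z)
      (fun z => h0 z / (1 - m0 z)) (hh0.div (measurable_const.sub hm0)) hm' hD'int hψ0int]
    refine integral_congr_ae ?_
    filter_upwards [hover] with ω hω
    have hpos : 1 - m0 (Z ω) ≠ 0 := by
      have : (0:ℝ) < 1 - m0 (Z ω) := by linarith [hω.2]
      exact this.ne'
    field_simp
  -- the integral is constant in t
  have hconst : ∀ t : ℝ, ∫ ω, f t ω ∂μ = ∫ ω, f 0 ω ∂μ := by
    intro t
    have hdiff : ∫ ω, (f t ω - f 0 ω) ∂μ = ∫ ω, f t ω ∂μ - ∫ ω, f 0 ω ∂μ :=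
      integral_sub (hint t) (hint 0)
    have heq : (fun ω => f t ω - f 0 ω) = fun ω =>
        t * ((h1 (Z ω) - h0 (Z ω)) - h1 (Z ω) / m0 (Z ω) * D ω
          + h0 (Z ω) / (1 - m0 (Z ω)) * (1 - D ω)) := by
      funext ω
      simp only [hf]
      ring
    have hB : ∫ ω, (f t ω - f 0 ω) ∂μ = 0 := by
      rw [heq, integral_const_mul]
      have hint2 : Integrable (fun ω => (h1 (Z ω) - h0 (Z ω))
          - h1 (Z ω) / m0 (Z ω) * D ω) μ := (hh1int.sub hh0int).sub hψ1int
      have : ∫ ω, ((h1 (Z ω) - h0 (Z ω)) - h1 (Z ω) / m0 (Z ω) * D ω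
            + h0 (Z ω) / (1 - m0 (Z ω)) * (1 - D ω)) ∂μ
          = (∫ ω, (h1 (Z ω) - h0 (Z ω)) ∂μ - ∫ ω, h1 (Z ω) / m0 (Z ω) * D ω ∂μ)
            + ∫ ω, h0 (Z ω) / (1 - m0 (Z ω)) * (1 - D ω) ∂μ := by
        have hint3 : Integrable (fun ω => h1 (Z ω) - h0 (Z ω)) μ := hh1int.sub hh0int
        rw [integral_add hint2 hψ0int, integral_sub hint3 hψ1int]
      rw [this, e1, e0, integral_sub hh1int hh0int]
      ring
    linarith [hdiff, hB]
  have hmain : (fun t : ℝ => ∫ ω, (f t ω - C) ∂μ) = fun _ : ℝ => ∫ ω, (f 0 ω - C) ∂μ := by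
    funext t
    rw [integral_sub (hint t) (integrable_const C), integral_sub (hint 0) (integrable_const C),
      hconst t]
  have : HasDerivAt (fun _ : ℝ => ∫ ω, (f 0 ω - C) ∂μ) 0 0 := hasDerivAt_const 0 _
  rw [← hmain] at this
  exact this
end

section
/- Neyman orthogonality of the AIPW ATE score with respect to the propensity score: for any bounded measurable direction h(z) such that m₀ + t h stays in [ε/2, 1−ε/2] for small t, the derivative at t = 0 of t ↦ E[ (g₀(1,Z) − g₀(0,Z)) + D(Y − g₀(1,Z))/(m₀(Z)+t h(Z)) − (1−D)(Y − g₀(0,Z))/(1−m₀(Z)−t h(Z)) − θ₀ ] equals 0. -/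
open MeasureTheory ProbabilityTheory
open scoped Topology

/-- Neyman orthogonality of the AIPW ATE score with respect to the propensity score:
for any bounded measurable direction `h(z)` keeping `m₀ + t h` in `[ε/2, 1−ε/2]` for small `t`,
the derivative at `t = 0` of `t ↦ E[ψ(W; θ₀, (g₀, m₀ + t h))]` is zero. -/
theorem statement7 {Ω 𝓩 : Type*} [MeasurableSpace Ω] [MeasurableSpace 𝓩]
    (μ : Measure Ω) [IsProbabilityMeasure μ]
    (Y D : Ω → ℝ) (Z : Ω → 𝓩) (g0 g1 m0 h : 𝓩 → ℝ) (ε δ M : ℝ)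
    (hε : 0 < ε) (hδ : 0 < δ)
    (hY : Measurable Y) (hD : Measurable D) (hZ : Measurable Z)
    (hg0 : Measurable g0) (hg1 : Measurable g1) (hm0 : Measurable m0)
    (hh : Measurable h) (hhbdd : ∀ z, |h z| ≤ M)
    (hDbin : ∀ ω, D ω = 0 ∨ D ω = 1)
    -- `g₀(d,Z) = E[Y ∣ D = d, Z]`:
    (hζ : μ[fun ω => Y ω - (D ω * g1 (Z ω) + (1 - D ω) * g0 (Z ω)) |
        MeasurableSpace.comap (fun ω => (D ω, Z ω)) inferInstance] =ᵐ[μ] 0)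
    -- `m₀(Z) = E[D ∣ Z]`:
    (hm : μ[D | MeasurableSpace.comap Z inferInstance] =ᵐ[μ] fun ω => m0 (Z ω))
    (hover : ∀ᵐ ω ∂μ, ε ≤ m0 (Z ω) ∧ m0 (Z ω) ≤ 1 - ε)
    -- the perturbed propensity score stays in `[ε/2, 1−ε/2]` for small `t`:
    (hpath : ∀ᵐ ω ∂μ, ∀ t : ℝ, |t| < δ →
        ε / 2 ≤ m0 (Z ω) + t * h (Z ω) ∧ m0 (Z ω) + t * h (Z ω) ≤ 1 - ε / 2)
    -- moments:
    (hYL2 : MemLp Y 2 μ) (hg0L2 : MemLp (fun ω => g0 (Z ω)) 2 μ)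
    (hg1L2 : MemLp (fun ω => g1 (Z ω)) 2 μ) :
    HasDerivAt (fun t : ℝ => ∫ ω,
        ((g1 (Z ω) - g0 (Z ω))
        + D ω * (Y ω - g1 (Z ω)) / (m0 (Z ω) + t * h (Z ω))
        - (1 - D ω) * (Y ω - g0 (Z ω)) / (1 - m0 (Z ω) - t * h (Z ω))
        - (∫ ω', (g1 (Z ω') - g0 (Z ω')) ∂μ)) ∂μ) 0 0 := by

  classical
  set θ : ℝ := ∫ ω', (g1 (Z ω') - g0 (Z ω')) ∂μ with hθ
  -- the map to (D, Z) and the sub-σ-algebra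
  have hp_meas : Measurable (fun ω => (D ω, Z ω)) := hD.prodMk hZ
  have hm_le : MeasurableSpace.comap (fun ω => (D ω, Z ω)) inferInstance
      ≤ ‹MeasurableSpace Ω› := hp_meas.comap_le
  haveI : SigmaFinite (μ.trim hm_le) := by
    haveI : IsFiniteMeasure (μ.trim hm_le) := isFiniteMeasure_trim hm_le
    infer_instance
  -- the residual
  set ζ : Ω → ℝ := fun ω => Y ω - (D ω * g1 (Z ω) + (1 - D ω) * g0 (Z ω)) with hζdef
  have hDbdd : ∀ ω, |D ω| ≤ 1 := by
    intro ω; rcases hDbin ω with h' | h' <;> simp [h']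
  have hζ_int : Integrable ζ μ := by
    have h1 : Integrable Y μ := hYL2.integrable one_le_two
    have h2 : Integrable (fun ω => D ω * g1 (Z ω)) μ :=
      (hg1L2.integrable one_le_two).bdd_mul hD.aestronglyMeasurable
        (Filter.Eventually.of_forall fun ω => by
          simpa [Real.norm_eq_abs] using hDbdd ω)
    have h3 : Integrable (fun ω => (1 - D ω) * g0 (Z ω)) μ :=
      (hg0L2.integrable one_le_two).bdd_mul
        (measurable_const.sub hD).aestronglyMeasurable
        (Filter.Eventually.of_forall fun ω => show ‖(1:ℝ) - D ω‖ ≤ 1 by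
          rcases hDbin ω with h' | h' <;> simp [h'])
    exact h1.sub (h2.add h3)
  have hA_int : Integrable (fun ω => g1 (Z ω) - g0 (Z ω)) μ :=
    (hg1L2.sub hg0L2).integrable one_le_two
  have hεpos : (0:ℝ) < 2 / ε := by positivity
  -- main claim: the integral vanishes for every |t| < δ
  have key : ∀ t : ℝ, |t| < δ →
      (∫ ω, ((g1 (Z ω) - g0 (Z ω))
        + D ω * (Y ω - g1 (Z ω)) / (m0 (Z ω) + t * h (Z ω))
        - (1 - D ω) * (Y ω - g0 (Z ω)) / (1 - m0 (Z ω) - t * h (Z ω))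
        - θ) ∂μ) = 0 := by
    intro t ht
    have hpath' : ∀ᵐ ω ∂μ, ε / 2 ≤ m0 (Z ω) + t * h (Z ω) ∧
        m0 (Z ω) + t * h (Z ω) ≤ 1 - ε / 2 := by
      filter_upwards [hpath] with ω hω using hω t ht
    set a : Ω → ℝ := fun ω => m0 (Z ω) + t * h (Z ω) with ha
    set gp : Ω → ℝ := fun ω => D ω / a ω with hgp
    set gm : Ω → ℝ := fun ω => (1 - D ω) / (1 - a ω) with hgm
    -- bounds
    have hgp_bdd : ∀ᵐ ω ∂μ, ‖gp ω‖ ≤ 2 / ε := by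
      filter_upwards [hpath'] with ω hω
      have h1 : ε / 2 ≤ a ω := hω.1
      have h2 : |a ω| ≥ ε / 2 := le_trans h1 (le_abs_self _)
      rw [Real.norm_eq_abs, hgp, abs_div]
      calc |D ω| / |a ω| ≤ 1 / (ε / 2) :=
            div_le_div₀ (by norm_num) (hDbdd ω) (by positivity) h2
        _ = 2 / ε := by field_simp
    have hgm_bdd : ∀ᵐ ω ∂μ, ‖gm ω‖ ≤ 2 / ε := by
      filter_upwards [hpath'] with ω hω
      have h1 : ε / 2 ≤ 1 - a ω := by linarith [hω.2]
      have h2 : |1 - a ω| ≥ ε / 2 := le_trans h1 (le_abs_self _)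
      have h3 : |1 - D ω| ≤ 1 := by rcases hDbin ω with h' | h' <;> simp [h']
      rw [Real.norm_eq_abs, hgm, abs_div]
      calc |1 - D ω| / |1 - a ω| ≤ 1 / (ε / 2) :=
            div_le_div₀ (by norm_num) h3 (by positivity) h2
        _ = 2 / ε := by field_simp
    -- measurability
    have ha_meas : Measurable a := (hm0.comp hZ).add (measurable_const.mul (hh.comp hZ))
    have hgp_meas : Measurable gp := hD.div ha_meas
    have hgm_meas : Measurable gm := (measurable_const.sub hD).div (measurable_const.sub ha_meas)
    -- strong measurability wrt m
    have hG : Measurable (fun q : ℝ × 𝓩 => q.1 / (m0 q.2 + t * h q.2)) :=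
      measurable_fst.div ((hm0.comp measurable_snd).add
        (measurable_const.mul (hh.comp measurable_snd)))
    have hG' : Measurable (fun q : ℝ × 𝓩 => (1 - q.1) / (1 - (m0 q.2 + t * h q.2))) :=
      (measurable_const.sub measurable_fst).div (measurable_const.sub
        ((hm0.comp measurable_snd).add (measurable_const.mul (hh.comp measurable_snd))))
    have hgp_sm : StronglyMeasurable[MeasurableSpace.comap (fun ω => (D ω, Z ω)) inferInstance] gp :=
      ((hG.comp (comap_measurable (fun ω => (D ω, Z ω))))).stronglyMeasurable
    have hgm_sm : StronglyMeasurable[MeasurableSpace.comap (fun ω => (D ω, Z ω)) inferInstance] gm :=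
      ((hG'.comp (comap_measurable (fun ω => (D ω, Z ω))))).stronglyMeasurable
    -- integrability of products
    have hgpζ_int : Integrable (fun ω => gp ω * ζ ω) μ :=
      hζ_int.bdd_mul hgp_meas.aestronglyMeasurable hgp_bdd
    have hgmζ_int : Integrable (fun ω => gm ω * ζ ω) μ :=
      hζ_int.bdd_mul hgm_meas.aestronglyMeasurable hgm_bdd
    -- rewrite the integrand pointwise
    have hpt : ∀ ω, (g1 (Z ω) - g0 (Z ω))
        + D ω * (Y ω - g1 (Z ω)) / (m0 (Z ω) + t * h (Z ω))
        - (1 - D ω) * (Y ω - g0 (Z ω)) / (1 - m0 (Z ω) - t * h (Z ω))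
        - θ
        = (g1 (Z ω) - g0 (Z ω)) + gp ω * ζ ω - gm ω * ζ ω - θ := by
      intro ω
      have h1 : D ω * (Y ω - g1 (Z ω)) = D ω * ζ ω := by
        rcases hDbin ω with h' | h' <;> simp [hζdef, h'] <;> ring
      have h2 : (1 - D ω) * (Y ω - g0 (Z ω)) = (1 - D ω) * ζ ω := by
        rcases hDbin ω with h' | h' <;> simp [hζdef, h'] <;> ring
      have h3 : 1 - m0 (Z ω) - t * h (Z ω) = 1 - a ω := by rw [ha]; ring
      rw [h1, h2, h3, hgp, hgm]
      ring
    rw [integral_congr_ae (Filter.Eventually.of_forall hpt)]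
    -- zero integrals from the conditional expectation
    have hzero : ∀ (g : Ω → ℝ),
        StronglyMeasurable[MeasurableSpace.comap (fun ω => (D ω, Z ω)) inferInstance] g →
        Integrable (fun ω => g ω * ζ ω) μ → (∫ ω, g ω * ζ ω ∂μ) = 0 := by
      intro g hg_sm hgζ_int
      have hce : μ[fun ω => g ω * ζ ω | MeasurableSpace.comap (fun ω => (D ω, Z ω)) inferInstance] =ᵐ[μ] 0 := by
        have h1 : μ[g * ζ | MeasurableSpace.comap (fun ω => (D ω, Z ω)) inferInstance] =ᵐ[μ]
            g * μ[ζ | MeasurableSpace.comap (fun ω => (D ω, Z ω)) inferInstance] :=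
          condExp_mul_of_stronglyMeasurable_left hg_sm hgζ_int hζ_int
        have h2 : g * μ[ζ | MeasurableSpace.comap (fun ω => (D ω, Z ω)) inferInstance]
            =ᵐ[μ] (0 : Ω → ℝ) := by
          filter_upwards [hζ] with ω hω
          simp only [Pi.mul_apply, Pi.zero_apply]
          rw [show (μ[ζ | MeasurableSpace.comap (fun ω => (D ω, Z ω)) inferInstance]) ω = 0
            from hω, mul_zero]
        exact h1.trans h2
      calc (∫ ω, g ω * ζ ω ∂μ) = ∫ ω, (μ[fun ω => g ω * ζ ω | MeasurableSpace.comap (fun ω => (D ω, Z ω)) inferInstance]) ω ∂μ :=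
            (integral_condExp hm_le).symm
        _ = ∫ ω, (0:ℝ) ∂μ := integral_congr_ae hce
        _ = 0 := integral_zero _ _
    have hzp : (∫ ω, gp ω * ζ ω ∂μ) = 0 := hzero gp hgp_sm hgpζ_int
    have hzm : (∫ ω, gm ω * ζ ω ∂μ) = 0 := hzero gm hgm_sm hgmζ_int
    have hI1 : Integrable (fun ω => g1 (Z ω) - g0 (Z ω) + gp ω * ζ ω) μ :=
      hA_int.add hgpζ_int
    have hI2 : Integrable (fun ω => g1 (Z ω) - g0 (Z ω) + gp ω * ζ ω - gm ω * ζ ω) μ :=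
      hI1.sub hgmζ_int
    rw [integral_sub hI2 (integrable_const θ), integral_sub hI1 hgmζ_int,
      integral_add hA_int hgpζ_int, hzp, hzm, integral_const]
    simp [hθ]
  -- conclude: the function is eventually 0 near 0
  have heq : (fun t : ℝ => ∫ ω, ((g1 (Z ω) - g0 (Z ω))
        + D ω * (Y ω - g1 (Z ω)) / (m0 (Z ω) + t * h (Z ω))
        - (1 - D ω) * (Y ω - g0 (Z ω)) / (1 - m0 (Z ω) - t * h (Z ω))
        - θ) ∂μ) =ᶠ[𝓝 (0:ℝ)] fun _ => (0:ℝ) := by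
    filter_upwards [Metric.ball_mem_nhds (0:ℝ) hδ] with t ht
    exact key t (by simpa [Real.dist_eq] using ht)
  exact (hasDerivAt_const (0:ℝ) (0:ℝ)).congr_of_eventuallyEq heq
end

section
/- Exact bias formula: for fixed candidate nuisance functions ĝ(0,·), ĝ(1,·) and m̂ with ε ≤ m̂(Z) ≤ 1−ε a.s., E[ψ(W; θ₀, ĝ, m̂)] = E[ ((m̂(Z) − m₀(Z))/m̂(Z))·(ĝ(1,Z) − g₀(1,Z)) + ((m̂(Z) − m₀(Z))/(1−m̂(Z)))·(ĝ(0,Z) − g₀(0,Z)) ], where ψ is the AIPW ATE score evaluated at θ₀ = E[g₀(1,Z) − g₀(0,Z)]. -/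
open MeasureTheory ProbabilityTheory
open scoped Topology

/-- Exact bias formula for the AIPW ATE score at fixed candidate nuisances `ĝ, m̂`:
`E[ψ(W; θ₀, ĝ, m̂)] = E[((m̂−m₀)/m̂)(ĝ(1,Z)−g₀(1,Z)) + ((m̂−m₀)/(1−m̂))(ĝ(0,Z)−g₀(0,Z))]`. -/
theorem statement8 {Ω 𝓩 : Type*} [MeasurableSpace Ω] [MeasurableSpace 𝓩]
    (μ : Measure Ω) [IsProbabilityMeasure μ]
    (Y D : Ω → ℝ) (Z : Ω → 𝓩) (g0 g1 ghat0 ghat1 m0 mhat : 𝓩 → ℝ) (ε : ℝ) (hε : 0 < ε)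
    (hY : Measurable Y) (hD : Measurable D) (hZ : Measurable Z)
    (hg0 : Measurable g0) (hg1 : Measurable g1) (hm0 : Measurable m0)
    (hghat0 : Measurable ghat0) (hghat1 : Measurable ghat1) (hmhat : Measurable mhat)
    (hDbin : ∀ ω, D ω = 0 ∨ D ω = 1)
    -- `g₀(d,Z) = E[Y ∣ D = d, Z]`:
    (hζ : μ[fun ω => Y ω - (D ω * g1 (Z ω) + (1 - D ω) * g0 (Z ω)) |
        MeasurableSpace.comap (fun ω => (D ω, Z ω)) inferInstance] =ᵐ[μ] 0)
    -- `m₀(Z) = E[D ∣ Z]`: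
    (hm : μ[D | MeasurableSpace.comap Z inferInstance] =ᵐ[μ] fun ω => m0 (Z ω))
    -- `m̂` bounded in `[ε, 1−ε]`:
    (hhatover : ∀ᵐ ω ∂μ, ε ≤ mhat (Z ω) ∧ mhat (Z ω) ≤ 1 - ε)
    -- square integrability:
    (hYL2 : MemLp Y 2 μ) (hg0L2 : MemLp (fun ω => g0 (Z ω)) 2 μ)
    (hg1L2 : MemLp (fun ω => g1 (Z ω)) 2 μ)
    (hghat0L2 : MemLp (fun ω => ghat0 (Z ω)) 2 μ)
    (hghat1L2 : MemLp (fun ω => ghat1 (Z ω)) 2 μ) :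
    ∫ ω, ((ghat1 (Z ω) - ghat0 (Z ω))
        + D ω * (Y ω - ghat1 (Z ω)) / mhat (Z ω)
        - (1 - D ω) * (Y ω - ghat0 (Z ω)) / (1 - mhat (Z ω))
        - (∫ ω', (g1 (Z ω') - g0 (Z ω')) ∂μ)) ∂μ
      = ∫ ω, ((mhat (Z ω) - m0 (Z ω)) / mhat (Z ω) * (ghat1 (Z ω) - g1 (Z ω))
        + (mhat (Z ω) - m0 (Z ω)) / (1 - mhat (Z ω)) * (ghat0 (Z ω) - g0 (Z ω))) ∂μ := by
  classical
  set T : ℝ := ∫ ω', (g1 (Z ω') - g0 (Z ω')) ∂μ with hT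
  set ζ : Ω → ℝ := fun ω => Y ω - (D ω * g1 (Z ω) + (1 - D ω) * g0 (Z ω)) with hζdef
  set k : Ω → ℝ := fun ω => (g1 (Z ω) - ghat1 (Z ω)) / mhat (Z ω)
      + (g0 (Z ω) - ghat0 (Z ω)) / (1 - mhat (Z ω)) with hkdef
  have hleDZ : MeasurableSpace.comap (fun ω => (D ω, Z ω)) inferInstance
      ≤ (inferInstance : MeasurableSpace Ω) := (hD.prodMk hZ).comap_le
  have hleZ : MeasurableSpace.comap Z inferInstance
      ≤ (inferInstance : MeasurableSpace Ω) := hZ.comap_le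
  set mDZ : MeasurableSpace Ω :=
    MeasurableSpace.comap (fun ω => (D ω, Z ω)) inferInstance with hmDZ
  set mZ : MeasurableSpace Ω := MeasurableSpace.comap Z inferInstance with hmZ
  -- boundedness of D, 1-D
  have hDabs : ∀ ω, ‖D ω‖ ≤ 1 := by
    intro ω; rcases hDbin ω with h | h <;> simp [h]
  have hDabs' : ∀ ω, ‖1 - D ω‖ ≤ 1 := by
    intro ω; rcases hDbin ω with h | h <;> simp [h]
  -- integrabilities
  have hYint : Integrable Y μ := hYL2.integrable one_le_two
  have hg0i : Integrable (fun ω => g0 (Z ω)) μ := hg0L2.integrable one_le_two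
  have hg1i : Integrable (fun ω => g1 (Z ω)) μ := hg1L2.integrable one_le_two
  have hhg0i : Integrable (fun ω => ghat0 (Z ω)) μ := hghat0L2.integrable one_le_two
  have hhg1i : Integrable (fun ω => ghat1 (Z ω)) μ := hghat1L2.integrable one_le_two
  have hDint : Integrable D μ := by
    simpa using (integrable_const (1 : ℝ)).bdd_mul hD.aestronglyMeasurable
      (ae_of_all _ hDabs)
  have hζi : Integrable ζ μ := by
    have h1 : Integrable (fun ω => D ω * g1 (Z ω)) μ :=
      hg1i.bdd_mul hD.aestronglyMeasurable (ae_of_all _ hDabs)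
    have h2 : Integrable (fun ω => (1 - D ω) * g0 (Z ω)) μ :=
      hg0i.bdd_mul (measurable_const.sub hD).aestronglyMeasurable (ae_of_all _ hDabs')
    exact hYint.sub (h1.add h2)
  have hm0i : Integrable (fun ω => m0 (Z ω)) μ := (integrable_condExp (m := mZ)).congr hm
  -- m0 ∘ Z is a.e. in [0,1]
  have hm0bd : ∀ᵐ ω ∂μ, 0 ≤ m0 (Z ω) ∧ m0 (Z ω) ≤ 1 := by
    have h0 : 0 ≤ᵐ[μ] μ[D | mZ] :=
      condExp_nonneg (ae_of_all _ fun ω => by rcases hDbin ω with h | h <;> simp [h])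
    have h1 : μ[D | mZ] ≤ᵐ[μ] fun _ => (1 : ℝ) := by
      have hle1 : D ≤ᵐ[μ] fun _ => (1 : ℝ) :=
        ae_of_all _ fun ω => by rcases hDbin ω with h | h <;> simp [h]
      have := condExp_mono (m := mZ) hDint (integrable_const (1 : ℝ)) hle1
      simpa [condExp_const hleZ (1 : ℝ)] using this
    filter_upwards [hm, h0, h1] with ω he h0ω h1ω
    constructor
    · rw [← he]; exact h0ω
    · rw [← he]; exact h1ω
  -- bounds from the overlap assumption
  have hmpos : ∀ᵐ ω ∂μ, 0 < mhat (Z ω) ∧ 0 < 1 - mhat (Z ω) := by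
    filter_upwards [hhatover] with ω h
    exact ⟨lt_of_lt_of_le hε h.1, by linarith [h.2]⟩
  -- Z1 : ∫ D/m̂ * ζ = 0
  have hDZm : @Measurable Ω (ℝ × 𝓩) mDZ _ (fun ω => (D ω, Z ω)) :=
    Measurable.of_comap_le le_rfl
  have hZm : @Measurable Ω 𝓩 mZ _ Z := Measurable.of_comap_le le_rfl
  have hf1bd : ∀ᵐ ω ∂μ, ‖D ω / mhat (Z ω)‖ ≤ ε⁻¹ := by
    filter_upwards [hhatover] with ω h
    have hmp : 0 < mhat (Z ω) := lt_of_lt_of_le hε h.1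
    rw [norm_div]
    rw [show ‖mhat (Z ω)‖ = mhat (Z ω) from by
      rw [Real.norm_eq_abs]; exact abs_of_pos hmp]
    calc ‖D ω‖ / mhat (Z ω) ≤ 1 / ε := by
          apply div_le_div₀ (by norm_num) (hDabs ω) hε h.1
      _ = ε⁻¹ := one_div ε
  have hf2bd : ∀ᵐ ω ∂μ, ‖(1 - D ω) / (1 - mhat (Z ω))‖ ≤ ε⁻¹ := by
    filter_upwards [hhatover] with ω h
    have hmp : 0 < 1 - mhat (Z ω) := by linarith [h.2]
    rw [norm_div]
    rw [show ‖1 - mhat (Z ω)‖ = 1 - mhat (Z ω) from by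
      rw [Real.norm_eq_abs]; exact abs_of_pos hmp]
    calc ‖1 - D ω‖ / (1 - mhat (Z ω)) ≤ 1 / ε := by
          apply div_le_div₀ (by norm_num) (hDabs' ω) hε (by linarith [h.2])
      _ = ε⁻¹ := one_div ε
  have hf1ζi : Integrable (fun ω => D ω / mhat (Z ω) * ζ ω) μ :=
    hζi.bdd_mul ((hD.div (hmhat.comp hZ)).aestronglyMeasurable) hf1bd
  have hf2ζi : Integrable (fun ω => (1 - D ω) / (1 - mhat (Z ω)) * ζ ω) μ :=
    hζi.bdd_mul (((measurable_const.sub hD).div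
      (measurable_const.sub (hmhat.comp hZ))).aestronglyMeasurable) hf2bd
  have Z1 : ∫ ω, D ω / mhat (Z ω) * ζ ω ∂μ = 0 := by
    have hf1m : StronglyMeasurable[mDZ] (fun ω => D ω / mhat (Z ω)) :=
      ((measurable_fst.div (hmhat.comp measurable_snd)).comp hDZm).stronglyMeasurable
    have hmul : μ[(fun ω => D ω / mhat (Z ω)) * ζ | mDZ] =ᵐ[μ] 0 := by
      refine (condExp_mul_of_stronglyMeasurable_left hf1m hf1ζi hζi).trans ?_
      filter_upwards [hζ] with ω h
      simp [Pi.mul_apply, h]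
    calc ∫ ω, D ω / mhat (Z ω) * ζ ω ∂μ
        = ∫ ω, (μ[(fun ω => D ω / mhat (Z ω)) * ζ | mDZ]) ω ∂μ :=
          (integral_condExp hleDZ).symm
      _ = 0 := by rw [integral_congr_ae hmul]; simp
  have Z2 : ∫ ω, (1 - D ω) / (1 - mhat (Z ω)) * ζ ω ∂μ = 0 := by
    have hf2m : StronglyMeasurable[mDZ] (fun ω => (1 - D ω) / (1 - mhat (Z ω))) :=
      (((measurable_const.sub measurable_fst).div
        (measurable_const.sub (hmhat.comp measurable_snd))).comp hDZm).stronglyMeasurable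
    have hmul : μ[(fun ω => (1 - D ω) / (1 - mhat (Z ω))) * ζ | mDZ] =ᵐ[μ] 0 := by
      refine (condExp_mul_of_stronglyMeasurable_left hf2m hf2ζi hζi).trans ?_
      filter_upwards [hζ] with ω h
      simp [Pi.mul_apply, h]
    calc ∫ ω, (1 - D ω) / (1 - mhat (Z ω)) * ζ ω ∂μ
        = ∫ ω, (μ[(fun ω => (1 - D ω) / (1 - mhat (Z ω))) * ζ | mDZ]) ω ∂μ :=
          (integral_condExp hleDZ).symm
      _ = 0 := by rw [integral_congr_ae hmul]; simp
  -- integrability of k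
  have hinv1bd : ∀ᵐ ω ∂μ, ‖(mhat (Z ω))⁻¹‖ ≤ ε⁻¹ := by
    filter_upwards [hhatover] with ω h
    have hmp : 0 < mhat (Z ω) := lt_of_lt_of_le hε h.1
    rw [Real.norm_eq_abs, abs_of_pos (inv_pos.mpr hmp)]
    exact inv_anti₀ hε h.1
  have hinv2bd : ∀ᵐ ω ∂μ, ‖(1 - mhat (Z ω))⁻¹‖ ≤ ε⁻¹ := by
    filter_upwards [hhatover] with ω h
    have hmp : 0 < 1 - mhat (Z ω) := by linarith [h.2]
    rw [Real.norm_eq_abs, abs_of_pos (inv_pos.mpr hmp)]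
    exact inv_anti₀ hε (by linarith [h.2])
  have hk1i : Integrable (fun ω => (g1 (Z ω) - ghat1 (Z ω)) / mhat (Z ω)) μ := by
    have := (hg1i.sub hhg1i).bdd_mul ((hmhat.comp hZ).inv.aestronglyMeasurable) hinv1bd
    exact this.congr (ae_of_all _ fun ω => inv_mul_eq_div _ _)
  have hk2i : Integrable (fun ω => (g0 (Z ω) - ghat0 (Z ω)) / (1 - mhat (Z ω))) μ := by
    have := (hg0i.sub hhg0i).bdd_mul
      ((measurable_const.sub (hmhat.comp hZ)).inv.aestronglyMeasurable) hinv2bd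
    exact this.congr (ae_of_all _ fun ω => inv_mul_eq_div _ _)
  have hki : Integrable k μ := hk1i.add hk2i
  have hDm0bd : ∀ᵐ ω ∂μ, ‖D ω - m0 (Z ω)‖ ≤ 2 := by
    filter_upwards [hm0bd] with ω h
    have hDω := hDabs ω
    rw [Real.norm_eq_abs] at hDω ⊢
    rw [abs_le] at hDω ⊢
    constructor <;> [linarith [h.2]; linarith [h.1]]
  have hprodi : Integrable (fun ω => (D ω - m0 (Z ω)) * k ω) μ :=
    hki.bdd_mul ((hD.sub (hm0.comp hZ)).aestronglyMeasurable) hDm0bd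
  -- Z3 : ∫ (D - m0∘Z) * k = 0
  have Z3 : ∫ ω, (D ω - m0 (Z ω)) * k ω ∂μ = 0 := by
    have hkm : StronglyMeasurable[mZ] k := by
      have : @Measurable Ω ℝ mZ _ k :=
        (((hg1.sub hghat1).div hmhat).add
          ((hg0.sub hghat0).div (measurable_const.sub hmhat))).comp hZm
      exact this.stronglyMeasurable
    have hgd : Integrable (fun ω => D ω - m0 (Z ω)) μ := hDint.sub hm0i
    have hkgi : Integrable (k * fun ω => D ω - m0 (Z ω)) μ :=
      hprodi.congr (ae_of_all _ fun ω => mul_comm _ _)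
    have hcond0 : μ[(fun ω => D ω - m0 (Z ω)) | mZ] =ᵐ[μ] 0 := by
      have hsub := condExp_sub (μ := μ) (m := mZ) hDint hm0i
      have hfix : μ[(fun ω => m0 (Z ω)) | mZ] = fun ω => m0 (Z ω) :=
        condExp_of_stronglyMeasurable hleZ ((hm0.comp hZm).stronglyMeasurable) hm0i
      refine ((condExp_congr_ae (ae_of_all _ fun ω => rfl)).trans hsub).trans ?_
      filter_upwards [hm] with ω h
      simp [Pi.sub_apply, h, hfix]
    have hmul : μ[k * (fun ω => D ω - m0 (Z ω)) | mZ] =ᵐ[μ] 0 := by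
      refine (condExp_mul_of_stronglyMeasurable_left hkm hkgi hgd).trans ?_
      filter_upwards [hcond0] with ω h
      simp [Pi.mul_apply, h]
    calc ∫ ω, (D ω - m0 (Z ω)) * k ω ∂μ
        = ∫ ω, (k * (fun ω => D ω - m0 (Z ω))) ω ∂μ := by
          refine integral_congr_ae (ae_of_all _ fun ω => ?_)
          simp [Pi.mul_apply, mul_comm]
      _ = ∫ ω, (μ[k * (fun ω => D ω - m0 (Z ω)) | mZ]) ω ∂μ := (integral_condExp hleZ).symm
      _ = 0 := by rw [integral_congr_ae hmul]; simp
  -- integrability of the bias (RHS) integrand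
  have hc1bd : ∀ᵐ ω ∂μ, ‖(mhat (Z ω) - m0 (Z ω)) / mhat (Z ω)‖ ≤ 2 * ε⁻¹ := by
    filter_upwards [hhatover, hm0bd] with ω h h0
    have hmp : 0 < mhat (Z ω) := lt_of_lt_of_le hε h.1
    rw [norm_div, Real.norm_eq_abs (mhat (Z ω)), abs_of_pos hmp]
    have hnum : ‖mhat (Z ω) - m0 (Z ω)‖ ≤ 2 := by
      rw [Real.norm_eq_abs, abs_le]
      constructor <;> [linarith [h.2, h0.2, hε.le]; linarith [h.1, h0.1, hε.le]]
    calc ‖mhat (Z ω) - m0 (Z ω)‖ / mhat (Z ω) ≤ 2 / ε := div_le_div₀ (by norm_num) hnum hε h.1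
      _ = 2 * ε⁻¹ := div_eq_mul_inv 2 ε
  have hc2bd : ∀ᵐ ω ∂μ, ‖(mhat (Z ω) - m0 (Z ω)) / (1 - mhat (Z ω))‖ ≤ 2 * ε⁻¹ := by
    filter_upwards [hhatover, hm0bd] with ω h h0
    have hmp : 0 < 1 - mhat (Z ω) := by linarith [h.2]
    rw [norm_div, Real.norm_eq_abs (1 - mhat (Z ω)), abs_of_pos hmp]
    have hnum : ‖mhat (Z ω) - m0 (Z ω)‖ ≤ 2 := by
      rw [Real.norm_eq_abs, abs_le]
      constructor <;> [linarith [h.2, h0.2, hε.le]; linarith [h.1, h0.1, hε.le]]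
    calc ‖mhat (Z ω) - m0 (Z ω)‖ / (1 - mhat (Z ω)) ≤ 2 / ε :=
          div_le_div₀ (by norm_num) hnum hε (by linarith [h.2])
      _ = 2 * ε⁻¹ := div_eq_mul_inv 2 ε
  have hG1i : Integrable
      (fun ω => (mhat (Z ω) - m0 (Z ω)) / mhat (Z ω) * (ghat1 (Z ω) - g1 (Z ω))) μ :=
    (hhg1i.sub hg1i).bdd_mul
      ((((hmhat.comp hZ).sub (hm0.comp hZ)).div (hmhat.comp hZ)).aestronglyMeasurable) hc1bd
  have hG2i : Integrable
      (fun ω => (mhat (Z ω) - m0 (Z ω)) / (1 - mhat (Z ω)) * (ghat0 (Z ω) - g0 (Z ω))) μ :=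
    (hhg0i.sub hg0i).bdd_mul
      ((((hmhat.comp hZ).sub (hm0.comp hZ)).div
        (measurable_const.sub (hmhat.comp hZ))).aestronglyMeasurable) hc2bd
  have hGi : Integrable
      (fun ω => (mhat (Z ω) - m0 (Z ω)) / mhat (Z ω) * (ghat1 (Z ω) - g1 (Z ω))
        + (mhat (Z ω) - m0 (Z ω)) / (1 - mhat (Z ω)) * (ghat0 (Z ω) - g0 (Z ω))) μ :=
    hG1i.add hG2i
  have hconsti : Integrable (fun ω => g1 (Z ω) - g0 (Z ω) - T) μ :=
    (hg1i.sub hg0i).sub (integrable_const T)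
  -- the a.e. pointwise decomposition
  have EQ : ∀ᵐ ω ∂μ,
      ((ghat1 (Z ω) - ghat0 (Z ω))
        + D ω * (Y ω - ghat1 (Z ω)) / mhat (Z ω)
        - (1 - D ω) * (Y ω - ghat0 (Z ω)) / (1 - mhat (Z ω)) - T)
      = D ω / mhat (Z ω) * ζ ω - (1 - D ω) / (1 - mhat (Z ω)) * ζ ω
        + (D ω - m0 (Z ω)) * k ω
        + (g1 (Z ω) - g0 (Z ω) - T)
        + ((mhat (Z ω) - m0 (Z ω)) / mhat (Z ω) * (ghat1 (Z ω) - g1 (Z ω))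
          + (mhat (Z ω) - m0 (Z ω)) / (1 - mhat (Z ω)) * (ghat0 (Z ω) - g0 (Z ω))) := by
    filter_upwards [hhatover] with ω h
    have hne1 : mhat (Z ω) ≠ 0 := ne_of_gt (lt_of_lt_of_le hε h.1)
    have hne2 : 1 - mhat (Z ω) ≠ 0 := ne_of_gt (by linarith [h.2])
    simp only [hζdef, hkdef]
    rcases hDbin ω with hd | hd <;> rw [hd] <;> field_simp <;> ring
  have S12 : ∫ ω, (D ω / mhat (Z ω) * ζ ω - (1 - D ω) / (1 - mhat (Z ω)) * ζ ω) ∂μ = (∫ ω, D ω / mhat (Z ω) * ζ ω ∂μ) - ∫ ω, (1 - D ω) / (1 - mhat (Z ω)) * ζ ω ∂μ :=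
    integral_sub hf1ζi hf2ζi
  have S123 : ∫ ω, (D ω / mhat (Z ω) * ζ ω - (1 - D ω) / (1 - mhat (Z ω)) * ζ ω + (D ω - m0 (Z ω)) * k ω) ∂μ = (∫ ω, (D ω / mhat (Z ω) * ζ ω - (1 - D ω) / (1 - mhat (Z ω)) * ζ ω) ∂μ) + ∫ ω, (D ω - m0 (Z ω)) * k ω ∂μ :=
    integral_add (hf1ζi.sub hf2ζi) hprodi
  have S1234 : ∫ ω, (D ω / mhat (Z ω) * ζ ω - (1 - D ω) / (1 - mhat (Z ω)) * ζ ω + (D ω - m0 (Z ω)) * k ω + (g1 (Z ω) - g0 (Z ω) - T)) ∂μ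
      = (∫ ω, (D ω / mhat (Z ω) * ζ ω - (1 - D ω) / (1 - mhat (Z ω)) * ζ ω + (D ω - m0 (Z ω)) * k ω) ∂μ) + ∫ ω, (g1 (Z ω) - g0 (Z ω) - T) ∂μ :=
    integral_add ((hf1ζi.sub hf2ζi).add hprodi) hconsti
  have S : ∫ ω, (D ω / mhat (Z ω) * ζ ω - (1 - D ω) / (1 - mhat (Z ω)) * ζ ω + (D ω - m0 (Z ω)) * k ω + (g1 (Z ω) - g0 (Z ω) - T) + ((mhat (Z ω) - m0 (Z ω)) / mhat (Z ω) * (ghat1 (Z ω) - g1 (Z ω)) + (mhat (Z ω) - m0 (Z ω)) / (1 - mhat (Z ω)) * (ghat0 (Z ω) - g0 (Z ω)))) ∂μ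
      = (∫ ω, (D ω / mhat (Z ω) * ζ ω - (1 - D ω) / (1 - mhat (Z ω)) * ζ ω + (D ω - m0 (Z ω)) * k ω + (g1 (Z ω) - g0 (Z ω) - T)) ∂μ) + ∫ ω, ((mhat (Z ω) - m0 (Z ω)) / mhat (Z ω) * (ghat1 (Z ω) - g1 (Z ω)) + (mhat (Z ω) - m0 (Z ω)) / (1 - mhat (Z ω)) * (ghat0 (Z ω) - g0 (Z ω))) ∂μ :=
    integral_add (((hf1ζi.sub hf2ζi).add hprodi).add hconsti) hGi
  rw [integral_congr_ae EQ, S, S1234, S123, S12, Z1, Z2, Z3]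
  have hTzero : ∫ ω, (g1 (Z ω) - g0 (Z ω) - T) ∂μ = 0 := by
    have h1 : ∫ ω, (g1 (Z ω) - g0 (Z ω) - T) ∂μ
        = (∫ ω, (g1 (Z ω) - g0 (Z ω)) ∂μ) - ∫ _ω, T ∂μ :=
      integral_sub (hg1i.sub hg0i) (integrable_const T)
    rw [h1, integral_const]
    simp [hT]
  rw [hTzero]
  ring
end

section
/- Product-bias bound: under the conditions of the exact bias formula, |E[ψ(W; θ₀, ĝ, m̂)]| ≤ (2/ε) · max_{d∈{0,1}} ‖ĝ(d,Z) − g₀(d,Z)‖_{L²} · ‖m̂(Z) − m₀(Z)‖_{L²}. -/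
open MeasureTheory ProbabilityTheory
open scoped Topology

section Aux

theorem aux_mul_int {Ω : Type*} [MeasurableSpace Ω] {μ : Measure Ω} (f g : Ω → ℝ)
    (hf : MemLp f 2 μ) (hg : MemLp g 2 μ) : Integrable (fun ω => f ω * g ω) μ := by
  have : MemLp (f • g) 1 μ := hg.smul hf
  exact memLp_one_iff_integrable.mp this

theorem aux_cs {Ω : Type*} [MeasurableSpace Ω] {μ : Measure Ω} (f g : Ω → ℝ)
    (hf : MemLp f 2 μ) (hg : MemLp g 2 μ) :
    ∫ ω, |f ω * g ω| ∂μ ≤ Real.sqrt (∫ ω, f ω ^ 2 ∂μ) * Real.sqrt (∫ ω, g ω ^ 2 ∂μ) := by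
  have h2 : (ENNReal.ofReal (2:ℝ)) = 2 := by norm_num
  have := integral_mul_le_Lp_mul_Lq_of_nonneg (μ := μ)
    (Real.HolderConjugate.two_two : Real.HolderConjugate 2 (2:ℝ))
    (f := fun ω => |f ω|) (g := fun ω => |g ω|)
    (Filter.Eventually.of_forall fun ω => abs_nonneg _)
    (Filter.Eventually.of_forall fun ω => abs_nonneg _)
    (by rw [h2]; simpa [Real.norm_eq_abs] using hf.norm)
    (by rw [h2]; simpa [Real.norm_eq_abs] using hg.norm)
  simp only [abs_mul] at this ⊢
  calc ∫ ω, |f ω| * |g ω| ∂μ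
      ≤ (∫ a, |f a| ^ (2:ℝ) ∂μ) ^ (1/2:ℝ) * (∫ a, |g a| ^ (2:ℝ) ∂μ) ^ (1/2:ℝ) := this
    _ = Real.sqrt (∫ ω, f ω ^ 2 ∂μ) * Real.sqrt (∫ ω, g ω ^ 2 ∂μ) := by
        rw [Real.sqrt_eq_rpow, Real.sqrt_eq_rpow]
        congr 2 <;>
        · apply integral_congr_ae
          filter_upwards with ω
          rw [show ((2:ℝ)) = ((2:ℕ):ℝ) by norm_num, Real.rpow_natCast]
          simp [sq_abs]

theorem aux_orth {Ω : Type*} {mΩ : MeasurableSpace Ω} {μ : Measure Ω} {m : MeasurableSpace Ω}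
    (hle : m ≤ mΩ) [IsProbabilityMeasure μ]
    (f g : Ω → ℝ) (hf : StronglyMeasurable[m] f) (hfg : Integrable (fun ω => f ω * g ω) μ)
    (hg : Integrable g μ) (h0 : μ[g|m] =ᵐ[μ] 0) : ∫ ω, f ω * g ω ∂μ = 0 := by
  haveI : SigmaFinite (μ.trim hle) := by
    haveI : IsFiniteMeasure (μ.trim hle) := isFiniteMeasure_trim hle
    infer_instance
  have h1 : ∫ ω, f ω * g ω ∂μ = ∫ ω, (μ[f * g|m]) ω ∂μ :=
    (integral_condExp hle (f := fun ω => f ω * g ω)).symm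
  rw [h1, integral_congr_ae ((condExp_mul_of_stronglyMeasurable_left hf hfg hg).trans ?_), integral_zero]
  filter_upwards [h0] with ω h
  simp [Pi.mul_apply, h]

end Aux

/-- Product-bias bound for the AIPW ATE score:
`|E[ψ(W; θ₀, ĝ, m̂)]| ≤ (2/ε) · max_d ‖ĝ(d,Z) − g₀(d,Z)‖_{L²} · ‖m̂(Z) − m₀(Z)‖_{L²}`. -/
theorem statement9 {Ω 𝓩 : Type*} [MeasurableSpace Ω] [MeasurableSpace 𝓩]
    (μ : Measure Ω) [IsProbabilityMeasure μ]
    (Y D : Ω → ℝ) (Z : Ω → 𝓩) (g0 g1 ghat0 ghat1 m0 mhat : 𝓩 → ℝ) (ε : ℝ) (hε : 0 < ε)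
    (hY : Measurable Y) (hD : Measurable D) (hZ : Measurable Z)
    (hg0 : Measurable g0) (hg1 : Measurable g1) (hm0 : Measurable m0)
    (hghat0 : Measurable ghat0) (hghat1 : Measurable ghat1) (hmhat : Measurable mhat)
    (hDbin : ∀ ω, D ω = 0 ∨ D ω = 1)
    -- `g₀(d,Z) = E[Y ∣ D = d, Z]`:
    (hζ : μ[fun ω => Y ω - (D ω * g1 (Z ω) + (1 - D ω) * g0 (Z ω)) |
        MeasurableSpace.comap (fun ω => (D ω, Z ω)) inferInstance] =ᵐ[μ] 0)
    -- `m₀(Z) = E[D ∣ Z]`: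
    (hm : μ[D | MeasurableSpace.comap Z inferInstance] =ᵐ[μ] fun ω => m0 (Z ω))
    -- `m̂` bounded in `[ε, 1−ε]`:
    (hhatover : ∀ᵐ ω ∂μ, ε ≤ mhat (Z ω) ∧ mhat (Z ω) ≤ 1 - ε)
    -- square integrability:
    (hYL2 : MemLp Y 2 μ) (hg0L2 : MemLp (fun ω => g0 (Z ω)) 2 μ)
    (hg1L2 : MemLp (fun ω => g1 (Z ω)) 2 μ)
    (hghat0L2 : MemLp (fun ω => ghat0 (Z ω)) 2 μ)
    (hghat1L2 : MemLp (fun ω => ghat1 (Z ω)) 2 μ)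
    (hm0L2 : MemLp (fun ω => m0 (Z ω)) 2 μ) :
    |∫ ω, ((ghat1 (Z ω) - ghat0 (Z ω))
        + D ω * (Y ω - ghat1 (Z ω)) / mhat (Z ω)
        - (1 - D ω) * (Y ω - ghat0 (Z ω)) / (1 - mhat (Z ω))
        - (∫ ω', (g1 (Z ω') - g0 (Z ω')) ∂μ)) ∂μ|
      ≤ (2 / ε)
        * max (Real.sqrt (∫ ω, (ghat1 (Z ω) - g1 (Z ω)) ^ 2 ∂μ))
              (Real.sqrt (∫ ω, (ghat0 (Z ω) - g0 (Z ω)) ^ 2 ∂μ))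
        * Real.sqrt (∫ ω, (mhat (Z ω) - m0 (Z ω)) ^ 2 ∂μ) := by
  -- abbreviations
  set θ0 : ℝ := ∫ ω', (g1 (Z ω') - g0 (Z ω')) ∂μ with hθ0
  set q1 : Ω → ℝ := fun ω => ghat1 (Z ω) - g1 (Z ω) with hq1def
  set q0 : Ω → ℝ := fun ω => ghat0 (Z ω) - g0 (Z ω) with hq0def
  set b : Ω → ℝ := fun ω => mhat (Z ω) - m0 (Z ω) with hbdef
  set ζ : Ω → ℝ := fun ω => Y ω - (D ω * g1 (Z ω) + (1 - D ω) * g0 (Z ω)) with hζdef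
  set u : Ω → ℝ := fun ω => D ω / mhat (Z ω) - (1 - D ω) / (1 - mhat (Z ω)) with hudef
  set v : Ω → ℝ := fun ω =>
    (g1 (Z ω) - ghat1 (Z ω)) / mhat (Z ω) + (g0 (Z ω) - ghat0 (Z ω)) / (1 - mhat (Z ω))
    with hvdef
  set W : Ω → ℝ := fun ω => D ω - m0 (Z ω) with hWdef
  set T : Ω → ℝ := fun ω =>
    q1 ω * b ω / mhat (Z ω) + q0 ω * b ω / (1 - mhat (Z ω)) with hTdef
  have hZle : MeasurableSpace.comap Z inferInstance ≤ ‹MeasurableSpace Ω› := hZ.comap_le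
  have hDZle : MeasurableSpace.comap (fun ω => (D ω, Z ω)) inferInstance ≤ ‹MeasurableSpace Ω› :=
    (hD.prodMk hZ).comap_le
  have hZm : Measurable[MeasurableSpace.comap Z inferInstance] Z :=
    measurable_iff_comap_le.mpr le_rfl
  have hDZm : Measurable[MeasurableSpace.comap (fun ω => (D ω, Z ω)) inferInstance]
      (fun ω => (D ω, Z ω)) := measurable_iff_comap_le.mpr le_rfl
  have hmhatZ : Measurable fun ω => mhat (Z ω) := hmhat.comp hZ
  -- a.e. positivity of the denominators
  have hpos : ∀ᵐ ω ∂μ, 0 < mhat (Z ω) ∧ 0 < 1 - mhat (Z ω)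
      ∧ ε ≤ mhat (Z ω) ∧ mhat (Z ω) ≤ 1 - ε := by
    filter_upwards [hhatover] with ω ⟨h1, h2⟩
    exact ⟨lt_of_lt_of_le hε h1, by linarith, h1, h2⟩
  -- L² memberships
  have hq1 : MemLp q1 2 μ := hghat1L2.sub hg1L2
  have hq0 : MemLp q0 2 μ := hghat0L2.sub hg0L2
  have hmhatL2 : MemLp (fun ω => mhat (Z ω)) 2 μ := by
    refine MemLp.of_bound hmhatZ.aestronglyMeasurable 1 ?_
    filter_upwards [hpos] with ω ⟨h1, h2, _, _⟩
    rw [Real.norm_eq_abs, abs_of_pos h1]; linarith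
  have hb : MemLp b 2 μ := hmhatL2.sub hm0L2
  have hDL2 : MemLp D 2 μ := by
    refine MemLp.of_bound hD.aestronglyMeasurable 1 ?_
    filter_upwards with ω
    rcases hDbin ω with h | h <;> simp [h]
  have hWL2 : MemLp W 2 μ := hDL2.sub hm0L2
  -- integrable pieces
  have hζint : Integrable ζ μ := by
    refine (hYL2.integrable one_le_two).sub (Integrable.add ?_ ?_)
    · exact aux_mul_int D _ hDL2 hg1L2
    · exact aux_mul_int (fun ω => 1 - D ω) _ ((memLp_const 1).sub hDL2) hg0L2
  have hWint : Integrable W μ := hWL2.integrable one_le_two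
  have hcint : Integrable (fun ω => g1 (Z ω) - g0 (Z ω)) μ :=
    (hg1L2.sub hg0L2).integrable one_le_two
  -- u is σ(D,Z)-measurable and bounded
  have hu_sm : StronglyMeasurable[MeasurableSpace.comap (fun ω => (D ω, Z ω)) inferInstance] u := by
    have : Measurable fun p : ℝ × 𝓩 => p.1 / mhat p.2 - (1 - p.1) / (1 - mhat p.2) :=
      (measurable_fst.div (hmhat.comp measurable_snd)).sub
        ((measurable_const.sub measurable_fst).div
          (measurable_const.sub (hmhat.comp measurable_snd)))
    exact (this.comp hDZm).stronglyMeasurable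
  have hζ_meas : Measurable ζ :=
    hY.sub ((hD.mul (hg1.comp hZ)).add ((measurable_const.sub hD).mul (hg0.comp hZ)))
  have hu_meas : Measurable u :=
    (hD.div hmhatZ).sub ((measurable_const.sub hD).div (measurable_const.sub hmhatZ))
  have hu_bdd : ∀ᵐ ω ∂μ, |u ω| ≤ ε⁻¹ := by
    filter_upwards [hpos] with ω ⟨h1, h2, h3, h4⟩
    have h5 : ε ≤ 1 - mhat (Z ω) := by linarith
    rcases hDbin ω with h | h
    · have : u ω = -(1 / (1 - mhat (Z ω))) := by simp [hudef, h]
      rw [this, abs_neg, abs_of_pos (by positivity)]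
      rw [one_div]
      exact inv_anti₀ hε h5
    · have : u ω = 1 / mhat (Z ω) := by simp [hudef, h]
      rw [this, abs_of_pos (by positivity), one_div]
      exact inv_anti₀ hε h3
  have huζ_int : Integrable (fun ω => u ω * ζ ω) μ := by
    refine Integrable.mono' (hζint.norm.const_mul ε⁻¹)
      (hu_meas.mul hζ_meas).aestronglyMeasurable ?_
    filter_upwards [hu_bdd] with ω hub
    rw [Real.norm_eq_abs, abs_mul]
    have : |ζ ω| = ‖ζ ω‖ := rfl
    calc |u ω| * |ζ ω| ≤ ε⁻¹ * |ζ ω| := by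
          exact mul_le_mul_of_nonneg_right hub (abs_nonneg _)
      _ = ε⁻¹ * ‖ζ ω‖ := rfl
  have huζ_zero : ∫ ω, u ω * ζ ω ∂μ = 0 :=
    aux_orth hDZle u ζ hu_sm huζ_int hζint hζ
  -- v is σ(Z)-measurable and in L²
  have hv_sm : StronglyMeasurable[MeasurableSpace.comap Z inferInstance] v := by
    have : Measurable fun z : 𝓩 => (g1 z - ghat1 z) / mhat z + (g0 z - ghat0 z) / (1 - mhat z) :=
      ((hg1.sub hghat1).div hmhat).add ((hg0.sub hghat0).div (measurable_const.sub hmhat))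
    exact (this.comp hZm).stronglyMeasurable
  have hv_meas : Measurable v :=
    (((hg1.comp hZ).sub (hghat1.comp hZ)).div hmhatZ).add
      (((hg0.comp hZ).sub (hghat0.comp hZ)).div (measurable_const.sub hmhatZ))
  have hinv1 : MemLp (fun ω => (mhat (Z ω))⁻¹) ⊤ μ := by
    refine memLp_top_of_bound hmhatZ.inv.aestronglyMeasurable ε⁻¹ ?_
    filter_upwards [hpos] with ω ⟨h1, _, h3, _⟩
    rw [Real.norm_eq_abs, abs_of_pos (by positivity)]
    exact inv_anti₀ hε h3
  have hinv2 : MemLp (fun ω => (1 - mhat (Z ω))⁻¹) ⊤ μ := by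
    refine memLp_top_of_bound (measurable_const.sub hmhatZ).inv.aestronglyMeasurable ε⁻¹ ?_
    filter_upwards [hpos] with ω ⟨_, h2, _, h4⟩
    rw [Real.norm_eq_abs, abs_of_pos (by positivity)]
    exact inv_anti₀ hε (by linarith)
  have hv2 : MemLp v 2 μ := by
    have t1 : MemLp ((fun ω => (mhat (Z ω))⁻¹) • fun ω => g1 (Z ω) - ghat1 (Z ω)) 2 μ :=
      (hg1L2.sub hghat1L2).smul hinv1
    have t2 : MemLp ((fun ω => (1 - mhat (Z ω))⁻¹) • fun ω => g0 (Z ω) - ghat0 (Z ω)) 2 μ :=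
      (hg0L2.sub hghat0L2).smul hinv2
    have := t1.add t2
    refine this.ae_eq (Filter.Eventually.of_forall fun ω => ?_)
    simp [hvdef, Pi.smul_apply, smul_eq_mul, div_eq_mul_inv, mul_comm]
  have hvW_int : Integrable (fun ω => v ω * W ω) μ := aux_mul_int v W hv2 hWL2
  have hW0 : μ[W | MeasurableSpace.comap Z inferInstance] =ᵐ[μ] 0 := by
    have hDint : Integrable D μ := hDL2.integrable one_le_two
    have hm0int : Integrable (fun ω => m0 (Z ω)) μ := hm0L2.integrable one_le_two
    have h1 : μ[W | MeasurableSpace.comap Z inferInstance]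
        =ᵐ[μ] μ[D | MeasurableSpace.comap Z inferInstance]
          - μ[(fun ω => m0 (Z ω)) | MeasurableSpace.comap Z inferInstance] :=
      condExp_sub hDint hm0int _
    have h2 : μ[(fun ω => m0 (Z ω)) | MeasurableSpace.comap Z inferInstance]
        =ᵐ[μ] fun ω => m0 (Z ω) := by
      haveI : SigmaFinite (μ.trim hZle) := by
        haveI : IsFiniteMeasure (μ.trim hZle) := isFiniteMeasure_trim hZle
        infer_instance
      exact Filter.EventuallyEq.of_eq
        (condExp_of_stronglyMeasurable (f := fun ω => m0 (Z ω)) hZle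
          (Measurable.stronglyMeasurable (hm0.comp hZm)) hm0int)
    filter_upwards [h1, h2, hm] with ω e1 e2 e3
    simp only [Pi.sub_apply, Pi.zero_apply] at *
    rw [e1, e2, e3]; ring
  have hvW_zero : ∫ ω, v ω * W ω ∂μ = 0 :=
    aux_orth hZle v W hv_sm hvW_int hWint hW0
  -- T is integrable
  have hT_meas : Measurable T := by
    apply Measurable.add
    · exact (((hghat1.comp hZ).sub (hg1.comp hZ)).mul
        ((hmhatZ).sub (hm0.comp hZ))).div hmhatZ
    · exact (((hghat0.comp hZ).sub (hg0.comp hZ)).mul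
        ((hmhatZ).sub (hm0.comp hZ))).div (measurable_const.sub hmhatZ)
  have hq1b_int : Integrable (fun ω => q1 ω * b ω) μ := aux_mul_int q1 b hq1 hb
  have hq0b_int : Integrable (fun ω => q0 ω * b ω) μ := aux_mul_int q0 b hq0 hb
  have hTbound_int : Integrable (fun ω => ε⁻¹ * (|q1 ω * b ω| + |q0 ω * b ω|)) μ :=
    (hq1b_int.abs.add hq0b_int.abs).const_mul ε⁻¹
  have hT_ptbd : ∀ᵐ ω ∂μ, |T ω| ≤ ε⁻¹ * (|q1 ω * b ω| + |q0 ω * b ω|) := by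
    filter_upwards [hpos] with ω ⟨h1, h2, h3, h4⟩
    have h5 : ε ≤ 1 - mhat (Z ω) := by linarith
    have key : ∀ (x d : ℝ), 0 < d → ε ≤ d → |x / d| ≤ ε⁻¹ * |x| := by
      intro x d hd hεd
      rw [abs_div, abs_of_pos hd]
      calc |x| / d ≤ |x| / ε := by gcongr
        _ = ε⁻¹ * |x| := by rw [div_eq_mul_inv, mul_comm]
    calc |T ω| ≤ |q1 ω * b ω / mhat (Z ω)| + |q0 ω * b ω / (1 - mhat (Z ω))| := abs_add_le _ _
      _ ≤ ε⁻¹ * |q1 ω * b ω| + ε⁻¹ * |q0 ω * b ω| :=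
          add_le_add (key _ _ h1 h3) (key _ _ h2 h5)
      _ = ε⁻¹ * (|q1 ω * b ω| + |q0 ω * b ω|) := by ring
  have hT_int : Integrable T μ :=
    Integrable.mono' hTbound_int hT_meas.aestronglyMeasurable
      (by filter_upwards [hT_ptbd] with ω h; rwa [Real.norm_eq_abs])
  -- pointwise a.e. decomposition of the score
  have hdecomp : ∀ᵐ ω ∂μ,
      (ghat1 (Z ω) - ghat0 (Z ω)) + D ω * (Y ω - ghat1 (Z ω)) / mhat (Z ω)
        - (1 - D ω) * (Y ω - ghat0 (Z ω)) / (1 - mhat (Z ω)) - θ0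
      = ((g1 (Z ω) - g0 (Z ω)) - θ0) + T ω + u ω * ζ ω + v ω * W ω := by
    filter_upwards [hpos] with ω ⟨h1, h2, _, _⟩
    have hne1 : mhat (Z ω) ≠ 0 := ne_of_gt h1
    have hne2 : 1 - mhat (Z ω) ≠ 0 := ne_of_gt h2
    simp only [hTdef, hudef, hvdef, hWdef, hζdef, hq1def, hq0def, hbdef]
    rcases hDbin ω with h | h <;> rw [h] <;> field_simp <;> ring
  -- split the integral
  have hI1 : Integrable (fun ω => (g1 (Z ω) - g0 (Z ω)) - θ0) μ :=
    hcint.sub (integrable_const θ0)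
  have hsplit : (∫ ω, ((ghat1 (Z ω) - ghat0 (Z ω))
        + D ω * (Y ω - ghat1 (Z ω)) / mhat (Z ω)
        - (1 - D ω) * (Y ω - ghat0 (Z ω)) / (1 - mhat (Z ω)) - θ0) ∂μ) = ∫ ω, T ω ∂μ := by
    rw [integral_congr_ae hdecomp]
    have hI12 : Integrable (fun ω => ((g1 (Z ω) - g0 (Z ω)) - θ0) + T ω) μ := hI1.add hT_int
    have hI123 : Integrable (fun ω => ((g1 (Z ω) - g0 (Z ω)) - θ0) + T ω + u ω * ζ ω) μ :=
      hI12.add huζ_int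
    rw [integral_add hI123 hvW_int, integral_add hI12 huζ_int, integral_add hI1 hT_int]
    rw [huζ_zero, hvW_zero]
    have : ∫ ω, ((g1 (Z ω) - g0 (Z ω)) - θ0) ∂μ = 0 := by
      rw [integral_sub hcint (integrable_const θ0), integral_const]
      simp [hθ0]
    rw [this]; ring
  rw [hsplit]
  -- final bound via Cauchy–Schwarz
  have habs : |∫ ω, T ω ∂μ| ≤ ∫ ω, |T ω| ∂μ := by
    simpa [Real.norm_eq_abs] using norm_integral_le_integral_norm (μ := μ) T
  have hstep : ∫ ω, |T ω| ∂μ ≤ ε⁻¹ * ((∫ ω, |q1 ω * b ω| ∂μ) + ∫ ω, |q0 ω * b ω| ∂μ) := by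
    calc ∫ ω, |T ω| ∂μ ≤ ∫ ω, ε⁻¹ * (|q1 ω * b ω| + |q0 ω * b ω|) ∂μ :=
          integral_mono_ae hT_int.abs hTbound_int hT_ptbd
      _ = ε⁻¹ * ((∫ ω, |q1 ω * b ω| ∂μ) + ∫ ω, |q0 ω * b ω| ∂μ) := by
          rw [integral_const_mul, integral_add hq1b_int.abs hq0b_int.abs]
  have hcs1 := aux_cs q1 b hq1 hb
  have hcs0 := aux_cs q0 b hq0 hb
  set S1 := Real.sqrt (∫ ω, q1 ω ^ 2 ∂μ) with hS1
  set S0 := Real.sqrt (∫ ω, q0 ω ^ 2 ∂μ) with hS0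
  set SB := Real.sqrt (∫ ω, b ω ^ 2 ∂μ) with hSB
  have hS1nn : 0 ≤ S1 := Real.sqrt_nonneg _
  have hS0nn : 0 ≤ S0 := Real.sqrt_nonneg _
  have hSBnn : 0 ≤ SB := Real.sqrt_nonneg _
  have hεinn : 0 ≤ ε⁻¹ := by positivity
  have hmax1 : S1 ≤ max S1 S0 := le_max_left _ _
  have hmax0 : S0 ≤ max S1 S0 := le_max_right _ _
  calc |∫ ω, T ω ∂μ| ≤ ∫ ω, |T ω| ∂μ := habs
    _ ≤ ε⁻¹ * ((∫ ω, |q1 ω * b ω| ∂μ) + ∫ ω, |q0 ω * b ω| ∂μ) := hstep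
    _ ≤ ε⁻¹ * (S1 * SB + S0 * SB) := by
        apply mul_le_mul_of_nonneg_left (add_le_add hcs1 hcs0) hεinn
    _ ≤ ε⁻¹ * (max S1 S0 * SB + max S1 S0 * SB) := by
        apply mul_le_mul_of_nonneg_left (add_le_add
          (mul_le_mul_of_nonneg_right hmax1 hSBnn)
          (mul_le_mul_of_nonneg_right hmax0 hSBnn)) hεinn
    _ = (2 / ε) * max S1 S0 * SB := by field_simp; ring
end

section
/- Variance lower bound for the AIPW ATE score: σ² := E[ψ²(W; θ₀, η₀)] ≥ E[ν² ζ²], where ν = D − m₀(Z) and ζ = Y − g₀(D,Z). -/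
open MeasureTheory ProbabilityTheory
open scoped Topology

set_option maxHeartbeats 1600000

/-- Variance lower bound for the AIPW ATE score: `E[ψ²(W; θ₀, η₀)] ≥ E[ν² ζ²]`
with `ν = D − m₀(Z)` and `ζ = Y − g₀(D,Z)`. -/
theorem statement11 {Ω 𝓩 : Type*} [MeasurableSpace Ω] [MeasurableSpace 𝓩]
    (μ : Measure Ω) [IsProbabilityMeasure μ]
    (Y D : Ω → ℝ) (Z : Ω → 𝓩) (g0 g1 m0 : 𝓩 → ℝ)
    (hY : Measurable Y) (hD : Measurable D) (hZ : Measurable Z)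
    (hg0 : Measurable g0) (hg1 : Measurable g1) (hm0 : Measurable m0)
    (hDbin : ∀ ω, D ω = 0 ∨ D ω = 1)
    -- `ζ = Y − g₀(D,Z)` with `E[ζ ∣ D, Z] = 0`:
    (hζ : μ[fun ω => Y ω - (D ω * g1 (Z ω) + (1 - D ω) * g0 (Z ω)) |
        MeasurableSpace.comap (fun ω => (D ω, Z ω)) inferInstance] =ᵐ[μ] 0)
    -- `m₀(Z) = E[D ∣ Z]` with `0 < m₀(Z) < 1` a.s.:
    (hm : μ[D | MeasurableSpace.comap Z inferInstance] =ᵐ[μ] fun ω => m0 (Z ω))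
    (hover : ∀ᵐ ω ∂μ, 0 < m0 (Z ω) ∧ m0 (Z ω) < 1)
    -- finite second moments of the score and its pieces:
    (hψ2 : Integrable (fun ω =>
        ((g1 (Z ω) - g0 (Z ω) - (∫ ω', (g1 (Z ω') - g0 (Z ω')) ∂μ))
        + D ω * (Y ω - (D ω * g1 (Z ω) + (1 - D ω) * g0 (Z ω))) / m0 (Z ω)
        - (1 - D ω) * (Y ω - (D ω * g1 (Z ω) + (1 - D ω) * g0 (Z ω))) / (1 - m0 (Z ω))) ^ 2) μ)
    (ha2 : Integrable (fun ω =>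
        (g1 (Z ω) - g0 (Z ω) - (∫ ω', (g1 (Z ω') - g0 (Z ω')) ∂μ)) ^ 2) μ)
    (hb2 : Integrable (fun ω =>
        ((D ω - m0 (Z ω)) * (Y ω - (D ω * g1 (Z ω) + (1 - D ω) * g0 (Z ω)))
          / (m0 (Z ω) * (1 - m0 (Z ω)))) ^ 2) μ)
    (hν2ζ2 : Integrable (fun ω =>
        (D ω - m0 (Z ω)) ^ 2 * (Y ω - (D ω * g1 (Z ω) + (1 - D ω) * g0 (Z ω))) ^ 2) μ) :
    ∫ ω, ((g1 (Z ω) - g0 (Z ω) - (∫ ω', (g1 (Z ω') - g0 (Z ω')) ∂μ))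
        + D ω * (Y ω - (D ω * g1 (Z ω) + (1 - D ω) * g0 (Z ω))) / m0 (Z ω)
        - (1 - D ω) * (Y ω - (D ω * g1 (Z ω) + (1 - D ω) * g0 (Z ω))) / (1 - m0 (Z ω))) ^ 2 ∂μ
      ≥ ∫ ω, (D ω - m0 (Z ω)) ^ 2
          * (Y ω - (D ω * g1 (Z ω) + (1 - D ω) * g0 (Z ω))) ^ 2 ∂μ := by
  classical
  set c : ℝ := ∫ ω', (g1 (Z ω') - g0 (Z ω')) ∂μ with hcdef
  set A : Ω → ℝ := fun ω => g1 (Z ω) - g0 (Z ω) - c with hAdef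
  set ζf : Ω → ℝ := fun ω => Y ω - (D ω * g1 (Z ω) + (1 - D ω) * g0 (Z ω)) with hζdef
  set B : Ω → ℝ := fun ω =>
    (D ω - m0 (Z ω)) * ζf ω / (m0 (Z ω) * (1 - m0 (Z ω))) with hBdef
  clear_value c
  have hA2int : Integrable (fun ω => A ω ^ 2) μ := ha2
  have hB2int : Integrable (fun ω => B ω ^ 2) μ := hb2
  have hνζ2int : Integrable (fun ω => (D ω - m0 (Z ω)) ^ 2 * ζf ω ^ 2) μ := hν2ζ2
  -- measurability basics
  have hζmeas : Measurable ζf :=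
    hY.sub ((hD.mul (hg1.comp hZ)).add (((measurable_const.sub hD)).mul (hg0.comp hZ)))
  have hAmeas : Measurable A := ((hg1.comp hZ).sub (hg0.comp hZ)).sub measurable_const
  have hBmeas : Measurable B :=
    ((hD.sub (hm0.comp hZ)).mul hζmeas).div
      ((hm0.comp hZ).mul (measurable_const.sub (hm0.comp hZ)))
  -- a.e. the LHS integrand equals (A + B)^2
  have haeB : ∀ᵐ ω ∂μ,
      A ω + D ω * ζf ω / m0 (Z ω) - (1 - D ω) * ζf ω / (1 - m0 (Z ω)) = A ω + B ω := by
    filter_upwards [hover] with ω hω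
    have hm1 : m0 (Z ω) ≠ 0 := ne_of_gt hω.1
    have hm2 : (1 : ℝ) - m0 (Z ω) ≠ 0 := ne_of_gt (by linarith [hω.2])
    rcases hDbin ω with h | h <;> simp only [hBdef, h] <;> field_simp [hm1, hm2] <;> ring
  -- pointwise a.e. inequalities
  have hkey : ∀ᵐ ω ∂μ,
      (D ω - m0 (Z ω)) ^ 2 * ζf ω ^ 2 ≤ B ω ^ 2 ∧ ζf ω ^ 2 ≤ B ω ^ 2 := by
    filter_upwards [hover] with ω hω
    have ht : (0 : ℝ) < m0 (Z ω) * (1 - m0 (Z ω)) := by nlinarith [hω.1, hω.2]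
    have ht2 : (0 : ℝ) < (m0 (Z ω) * (1 - m0 (Z ω))) ^ 2 := by positivity
    have htle : m0 (Z ω) * (1 - m0 (Z ω)) ≤ 1 := by nlinarith [hω.1, hω.2]
    have h1 : (m0 (Z ω) * (1 - m0 (Z ω))) ^ 2 ≤ 1 := by nlinarith
    have hB2 : B ω ^ 2 =
        (D ω - m0 (Z ω)) ^ 2 * ζf ω ^ 2 / (m0 (Z ω) * (1 - m0 (Z ω))) ^ 2 := by
      simp only [hBdef]; field_simp
    constructor
    · rw [hB2, le_div_iff₀ ht2]
      nlinarith [mul_nonneg (sq_nonneg (D ω - m0 (Z ω))) (sq_nonneg (ζf ω))]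
    · rw [hB2, le_div_iff₀ ht2]
      have hν : (m0 (Z ω) * (1 - m0 (Z ω))) ^ 2 ≤ (D ω - m0 (Z ω)) ^ 2 := by
        rcases hDbin ω with h | h <;> rw [h] <;> nlinarith [hω.1, hω.2]
      nlinarith [sq_nonneg (ζf ω)]
  -- integrability of ζ
  have hζint : Integrable ζf μ := by
    refine Integrable.mono' ((integrable_const (1 : ℝ)).add hB2int)
      hζmeas.aestronglyMeasurable ?_
    filter_upwards [hkey] with ω hω
    have h1 : |ζf ω| ≤ 1 + ζf ω ^ 2 := by nlinarith [sq_abs (ζf ω), abs_nonneg (ζf ω)]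
    have h2 : ζf ω ^ 2 ≤ B ω ^ 2 := hω.2
    show ‖ζf ω‖ ≤ 1 + B ω ^ 2
    rw [Real.norm_eq_abs]; linarith
  -- integrability of A*B
  have hABint : Integrable (fun ω => A ω * B ω) μ := by
    refine Integrable.mono' ((hA2int.add hB2int).div_const 2)
      (hAmeas.mul hBmeas).aestronglyMeasurable ?_
    filter_upwards with ω
    show ‖A ω * B ω‖ ≤ (A ω ^ 2 + B ω ^ 2) / 2
    rw [Real.norm_eq_abs, abs_mul]
    have h := two_mul_le_add_sq |A ω| |B ω|
    rw [sq_abs, sq_abs] at h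
    ring_nf at h ⊢
    linarith
  -- the cross term vanishes
  have hcross : ∫ ω, A ω * B ω ∂μ = 0 := by
    have hle : MeasurableSpace.comap (fun ω => (D ω, Z ω)) inferInstance
        ≤ ‹MeasurableSpace Ω› := (hD.prodMk hZ).comap_le
    set F : Ω → ℝ := fun ω =>
      (g1 (Z ω) - g0 (Z ω) - c) * (D ω - m0 (Z ω)) / (m0 (Z ω) * (1 - m0 (Z ω))) with hFdef
    have hFeq : (fun ω => A ω * B ω) = fun ω => F ω * ζf ω := by
      funext ω; simp only [hFdef, hBdef, hAdef]; ring
    have hFm : Measurable[MeasurableSpace.comap (fun ω => (D ω, Z ω)) inferInstance] F := by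
      have hpair : Measurable[MeasurableSpace.comap (fun ω => (D ω, Z ω)) inferInstance]
          fun ω => (D ω, Z ω) := Measurable.of_comap_le le_rfl
      have hφ : Measurable fun p : ℝ × 𝓩 =>
          (g1 p.2 - g0 p.2 - c) * (p.1 - m0 p.2) / (m0 p.2 * (1 - m0 p.2)) := by
        refine Measurable.div ?_ ?_
        · exact (((hg1.comp measurable_snd).sub (hg0.comp measurable_snd)).sub
            measurable_const).mul (measurable_fst.sub (hm0.comp measurable_snd))
        · exact (hm0.comp measurable_snd).mul
            (measurable_const.sub (hm0.comp measurable_snd))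
      exact hφ.comp hpair
    have hFζint : Integrable (fun ω => F ω * ζf ω) μ := hFeq ▸ hABint
    have hpull : μ[(fun ω => F ω * ζf ω) |
          MeasurableSpace.comap (fun ω => (D ω, Z ω)) inferInstance]
        =ᵐ[μ] fun ω => F ω * (μ[ζf |
          MeasurableSpace.comap (fun ω => (D ω, Z ω)) inferInstance]) ω := by
      have := condExp_mul_of_stronglyMeasurable_left (μ := μ) hFm.stronglyMeasurable
        (by exact hFζint) hζint
      exact this
    have hzero : μ[(fun ω => F ω * ζf ω) |
          MeasurableSpace.comap (fun ω => (D ω, Z ω)) inferInstance] =ᵐ[μ] 0 := by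
      refine hpull.trans ?_
      filter_upwards [hζ] with ω hω
      show F ω * _ = (0 : Ω → ℝ) ω
      rw [show (μ[fun ω => Y ω - (D ω * g1 (Z ω) + (1 - D ω) * g0 (Z ω)) |
          MeasurableSpace.comap (fun ω => (D ω, Z ω)) inferInstance]) ω = 0 from hω]
      simp
    calc ∫ ω, A ω * B ω ∂μ = ∫ ω, F ω * ζf ω ∂μ := by rw [hFeq]
      _ = ∫ ω, (μ[(fun ω => F ω * ζf ω) |
            MeasurableSpace.comap (fun ω => (D ω, Z ω)) inferInstance]) ω ∂μ :=
          (integral_condExp (μ := μ) (f := fun ω => F ω * ζf ω) hle).symm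
      _ = ∫ ω, (0 : Ω → ℝ) ω ∂μ := integral_congr_ae hzero
      _ = 0 := by simp
  -- split the LHS integral
  have hLHS : ∫ ω, (A ω + D ω * ζf ω / m0 (Z ω)
        - (1 - D ω) * ζf ω / (1 - m0 (Z ω))) ^ 2 ∂μ
      = (∫ ω, A ω ^ 2 ∂μ) + ((∫ ω, 2 * (A ω * B ω) ∂μ) + ∫ ω, B ω ^ 2 ∂μ) := by
    calc ∫ ω, (A ω + D ω * ζf ω / m0 (Z ω)
          - (1 - D ω) * ζf ω / (1 - m0 (Z ω))) ^ 2 ∂μ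
        = ∫ ω, (A ω ^ 2 + (2 * (A ω * B ω) + B ω ^ 2)) ∂μ := by
          refine integral_congr_ae ?_
          filter_upwards [haeB] with ω hω
          rw [hω]; ring
      _ = (∫ ω, A ω ^ 2 ∂μ) + ∫ ω, (2 * (A ω * B ω) + B ω ^ 2) ∂μ :=
          integral_add hA2int ((hABint.const_mul 2).add hB2int)
      _ = (∫ ω, A ω ^ 2 ∂μ) + ((∫ ω, 2 * (A ω * B ω) ∂μ) + ∫ ω, B ω ^ 2 ∂μ) := by
          rw [integral_add (hABint.const_mul 2) hB2int]
  have hA2nn : 0 ≤ ∫ ω, A ω ^ 2 ∂μ := integral_nonneg fun ω => sq_nonneg _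
  have hmono : ∫ ω, (D ω - m0 (Z ω)) ^ 2 * ζf ω ^ 2 ∂μ ≤ ∫ ω, B ω ^ 2 ∂μ := by
    refine integral_mono_ae hνζ2int hB2int ?_
    filter_upwards [hkey] with ω hω
    exact hω.1
  have h2 : ∫ ω, 2 * (A ω * B ω) ∂μ = 0 := by
    rw [integral_const_mul, hcross]; ring
  calc ∫ ω, (A ω + D ω * ζf ω / m0 (Z ω)
        - (1 - D ω) * ζf ω / (1 - m0 (Z ω))) ^ 2 ∂μ
      = (∫ ω, A ω ^ 2 ∂μ) + ((∫ ω, 2 * (A ω * B ω) ∂μ) + ∫ ω, B ω ^ 2 ∂μ) := hLHS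
    _ ≥ ∫ ω, (D ω - m0 (Z ω)) ^ 2 * ζf ω ^ 2 ∂μ := by
        rw [h2, zero_add]; linarith
end

section
/- Identification of the ATTE via its score: E[ Dζ/m − m₀(Z)(1−D)ζ₀/((1−m₀(Z)) m) − θ₀ D/m ] = 0, where ζ₀ = Y − g₀(0,Z), m = E[D], and θ₀ = E[g₀(1,Z) − g₀(0,Z) ∣ D = 1]. -/
open MeasureTheory ProbabilityTheory
open scoped Topology

lemma aux_int_mul_zero {Ω : Type*} {mΩ : MeasurableSpace Ω} {m' : MeasurableSpace Ω}
    (hle : m' ≤ mΩ) (μ : Measure[mΩ] Ω) [IsProbabilityMeasure μ] {f ζ : Ω → ℝ}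
    (hf : StronglyMeasurable[m'] f) (hcz : μ[ζ|m'] =ᵐ[μ] 0)
    (hζint : Integrable ζ μ) (hprod : Integrable (f * ζ) μ) :
    ∫ ω, f ω * ζ ω ∂μ = 0 := by
  haveI : SigmaFinite (μ.trim hle) := by
    haveI : IsFiniteMeasure (μ.trim hle) := isFiniteMeasure_trim hle
    infer_instance
  have h1 : ∫ ω, f ω * ζ ω ∂μ = ∫ ω, (μ[f * ζ|m']) ω ∂μ := (integral_condExp hle).symm
  have h2 : μ[f * ζ|m'] =ᵐ[μ] f * μ[ζ|m'] :=
    condExp_mul_of_stronglyMeasurable_left hf hprod hζint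
  have h3 : f * μ[ζ|m'] =ᵐ[μ] 0 := by
    filter_upwards [hcz] with ω hω
    simp [Pi.mul_apply, hω]
  rw [h1, integral_congr_ae (h2.trans h3)]
  simp

/-- Identification of the ATTE via its Neyman-orthogonal score:
`E[Dζ₀/m − m₀(Z)(1−D)ζ₀/((1−m₀(Z))m) − θ₀ D/m] = 0` where `ζ₀ = Y − g₀(0,Z)`,
`m = E[D]` and `θ₀ = E[g₀(1,Z) − g₀(0,Z) ∣ D = 1] = E[D(g₀(1,Z) − g₀(0,Z))]/m`. -/
theorem statement14 {Ω 𝓩 : Type*} [MeasurableSpace Ω] [MeasurableSpace 𝓩]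
    (μ : Measure Ω) [IsProbabilityMeasure μ]
    (Y D : Ω → ℝ) (Z : Ω → 𝓩) (g0 g1 m0 : 𝓩 → ℝ) (ε : ℝ) (hε : 0 < ε)
    (hY : Measurable Y) (hD : Measurable D) (hZ : Measurable Z)
    (hg0 : Measurable g0) (hg1 : Measurable g1) (hm0 : Measurable m0)
    (hDbin : ∀ ω, D ω = 0 ∨ D ω = 1)
    -- `Y = g₀(D,Z) + ζ` with `E[ζ ∣ D, Z] = 0`:
    (hζ : μ[fun ω => Y ω - (D ω * g1 (Z ω) + (1 - D ω) * g0 (Z ω)) |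
        MeasurableSpace.comap (fun ω => (D ω, Z ω)) inferInstance] =ᵐ[μ] 0)
    -- `m₀(Z) = E[D ∣ Z]` with `ε ≤ m₀(Z) ≤ 1 − ε` a.s.:
    (hm : μ[D | MeasurableSpace.comap Z inferInstance] =ᵐ[μ] fun ω => m0 (Z ω))
    (hover : ∀ᵐ ω ∂μ, ε ≤ m0 (Z ω) ∧ m0 (Z ω) ≤ 1 - ε)
    -- `m = E[D] ∈ (0,1)`:
    (hD1 : Integrable D μ) (hmpos : 0 < ∫ ω, D ω ∂μ) (hmlt1 : (∫ ω, D ω ∂μ) < 1)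
    -- moments:
    (hYL2 : MemLp Y 2 μ) (hg0L2 : MemLp (fun ω => g0 (Z ω)) 2 μ)
    (hg1L2 : MemLp (fun ω => g1 (Z ω)) 2 μ)
    (hintθ : Integrable (fun ω => D ω * (g1 (Z ω) - g0 (Z ω))) μ)
    (hint1 : Integrable (fun ω => D ω * (Y ω - g0 (Z ω))) μ)
    (hint0 : Integrable (fun ω =>
        m0 (Z ω) * (1 - D ω) * (Y ω - g0 (Z ω)) / (1 - m0 (Z ω))) μ) :
    ∫ ω, (D ω * (Y ω - g0 (Z ω)) / (∫ ω', D ω' ∂μ)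
        - m0 (Z ω) * (1 - D ω) * (Y ω - g0 (Z ω)) / ((1 - m0 (Z ω)) * (∫ ω', D ω' ∂μ))
        - ((∫ ω', D ω' * (g1 (Z ω') - g0 (Z ω')) ∂μ) / (∫ ω', D ω' ∂μ))
          * (D ω / (∫ ω', D ω' ∂μ))) ∂μ = 0 := by
  set m : ℝ := ∫ ω', D ω' ∂μ with hm_def
  have hmne : m ≠ 0 := ne_of_gt hmpos
  have hle : MeasurableSpace.comap (fun ω => (D ω, Z ω)) inferInstance ≤ _ :=
    measurable_iff_comap_le.mp (hD.prodMk hZ)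
  set mDZ : MeasurableSpace Ω := MeasurableSpace.comap (fun ω => (D ω, Z ω)) inferInstance with hmDZ
  set ζ : Ω → ℝ := fun ω => Y ω - (D ω * g1 (Z ω) + (1 - D ω) * g0 (Z ω)) with hζdef
  have hpair : Measurable[mDZ] (fun ω => (D ω, Z ω)) := comap_measurable _
  have hDm : Measurable[mDZ] D := (measurable_fst.comp hpair : _)
  have hZm : Measurable[mDZ] Z := (measurable_snd.comp hpair : _)
  -- ζ is integrable
  have hDbd : ∀ ω, ‖D ω‖ ≤ 1 := by
    intro ω; rcases hDbin ω with h | h <;> simp [h]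
  have h1Dbd : ∀ ω, ‖1 - D ω‖ ≤ 1 := by
    intro ω; rcases hDbin ω with h | h <;> simp [h]
  have hYint : Integrable Y μ := hYL2.integrable (by norm_num)
  have hg1int : Integrable (fun ω => g1 (Z ω)) μ := hg1L2.integrable (by norm_num)
  have hg0int : Integrable (fun ω => g0 (Z ω)) μ := hg0L2.integrable (by norm_num)
  have hζint : Integrable ζ μ := by
    apply hYint.sub
    have h1 : Integrable (fun ω => D ω * g1 (Z ω)) μ :=
      hg1int.bdd_mul hD.aestronglyMeasurable (Filter.Eventually.of_forall hDbd)
    have h2 : Integrable (fun ω => (1 - D ω) * g0 (Z ω)) μ :=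
      hg0int.bdd_mul (measurable_const.sub hD).aestronglyMeasurable (Filter.Eventually.of_forall h1Dbd)
    exact h1.add h2
  -- First: ∫ D ζ = 0, giving ∫ D(Y-g0) = ∫ D(g1-g0)
  have hDζ_eq : ∀ ω, D ω * ζ ω
      = D ω * (Y ω - g0 (Z ω)) - D ω * (g1 (Z ω) - g0 (Z ω)) := by
    intro ω; rcases hDbin ω with h | h <;> simp [hζdef, h] <;> ring
  have hDζint : Integrable (D * ζ) μ := by
    have := hint1.sub hintθ
    exact this.congr (Filter.Eventually.of_forall fun ω => (hDζ_eq ω).symm)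
  have hint_Dζ : ∫ ω, D ω * ζ ω ∂μ = 0 :=
    aux_int_mul_zero hle μ (hDm.stronglyMeasurable) hζ hζint hDζint
  have hA : ∫ ω, D ω * (Y ω - g0 (Z ω)) ∂μ = ∫ ω, D ω * (g1 (Z ω) - g0 (Z ω)) ∂μ := by
    have := hint_Dζ
    rw [integral_congr_ae (Filter.Eventually.of_forall hDζ_eq),
      integral_sub hint1 hintθ, sub_eq_zero] at this
    exact this
  -- Second: ∫ f₂ ζ = 0 with f₂ = m0(Z)(1-D)/(1-m0(Z))
  set f2 : Ω → ℝ := fun ω => m0 (Z ω) * (1 - D ω) / (1 - m0 (Z ω)) with hf2def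
  have hf2m : StronglyMeasurable[mDZ] f2 := by
    apply Measurable.stronglyMeasurable
    exact (((hm0.comp hZm).mul (measurable_const.sub hDm)).div
      (measurable_const.sub (hm0.comp hZm)))
  have hf2ζ_eq : ∀ ω, f2 ω * ζ ω
      = m0 (Z ω) * (1 - D ω) * (Y ω - g0 (Z ω)) / (1 - m0 (Z ω)) := by
    intro ω; rcases hDbin ω with h | h
    · simp only [hf2def, hζdef, h]
      rw [div_mul_eq_mul_div]
      ring_nf
    · simp [hf2def, hζdef, h]
  have hf2ζint : Integrable (f2 * ζ) μ :=
    hint0.congr (Filter.Eventually.of_forall fun ω => (hf2ζ_eq ω).symm)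
  have hB : ∫ ω, m0 (Z ω) * (1 - D ω) * (Y ω - g0 (Z ω)) / (1 - m0 (Z ω)) ∂μ = 0 := by
    rw [← integral_congr_ae (Filter.Eventually.of_forall hf2ζ_eq)]
    exact aux_int_mul_zero hle μ hf2m hζ hζint hf2ζint
  -- Put everything together
  set T : ℝ := ∫ ω', D ω' * (g1 (Z ω') - g0 (Z ω')) ∂μ with hTdef
  have hsplit : ∀ ω, (D ω * (Y ω - g0 (Z ω)) / m
      - m0 (Z ω) * (1 - D ω) * (Y ω - g0 (Z ω)) / ((1 - m0 (Z ω)) * m)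
      - (T / m) * (D ω / m))
      = (D ω * (Y ω - g0 (Z ω))) / m
        - (m0 (Z ω) * (1 - D ω) * (Y ω - g0 (Z ω)) / (1 - m0 (Z ω))) / m
        - (T / (m * m)) * D ω := by
    intro ω
    rw [div_mul_eq_div_div_swap]
    ring
  rw [integral_congr_ae (Filter.Eventually.of_forall hsplit)]
  have i1 : Integrable (fun ω => D ω * (Y ω - g0 (Z ω)) / m) μ := hint1.div_const m
  have i2 : Integrable
      (fun ω => m0 (Z ω) * (1 - D ω) * (Y ω - g0 (Z ω)) / (1 - m0 (Z ω)) / m) μ :=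
    hint0.div_const m
  have i12 : Integrable (fun ω => D ω * (Y ω - g0 (Z ω)) / m
      - m0 (Z ω) * (1 - D ω) * (Y ω - g0 (Z ω)) / (1 - m0 (Z ω)) / m) μ := i1.sub i2
  have i3 : Integrable (fun ω => T / (m * m) * D ω) μ := hD1.const_mul _
  rw [integral_sub i12 i3, integral_sub i1 i2, integral_div, integral_div,
    integral_const_mul, hB, hA, ← hm_def]
  field_simp
  ring
end
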